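/- arXiv:1802.09763 — 6 statements merged into one kernel-verified Lean document; each statement's English description precedes it below -/
import Mathlib

section
/- Let f : ℝ → ℝ be continuous with primitive F (i.e., F' = f), and let u : ℝ × [0,1] → ℝ be a C² solution of the heat equation with reaction term, u_t = u_xx + f(u), satisfying Dirichlet boundary conditions u(t,0) = u(t,1) = 0 for all t. Then the function V(t) = ∫₀¹ ( (1/2)·(u_x(t,x))² − F(u(t,x)) ) dx satisfies V'(t) = −∫₀¹ (u_t(t,x))² dx for all t. -/
/-- Classical Lyapunov function for `u_t = u_xx + f(u)` with Dirichlet boundary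
conditions on `[0,1]`: `V(t) = ∫₀¹ ½ u_x² − F(u) dx` satisfies `V' = −∫₀¹ u_t²`. -/
theorem stmt0
    (f F : ℝ → ℝ) (hf : Continuous f) (hF : ∀ y, HasDerivAt F (f y) y)
    (u : ℝ → ℝ → ℝ) (hu : ContDiff ℝ 2 (Function.uncurry u))
    (pde : ∀ t, ∀ x ∈ Set.Icc (0:ℝ) 1,
      deriv (fun s => u s x) t = deriv (deriv (u t)) x + f (u t x))
    (bc0 : ∀ t, u t 0 = 0) (bc1 : ∀ t, u t 1 = 0) :
    ∀ t, HasDerivAt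
      (fun s => ∫ x in (0:ℝ)..1, ((1/2 : ℝ) * (deriv (u s) x)^2 - F (u s x)))
      (-∫ x in (0:ℝ)..1, (deriv (fun s => u s x) t)^2) t := by
  intro t
  set U : ℝ × ℝ → ℝ := Function.uncurry u with hUdef
  have hUdiff : Differentiable ℝ U := hu.differentiable two_ne_zero
  set A : ℝ × ℝ → (ℝ × ℝ →L[ℝ] ℝ) := fderiv ℝ U with hAdef
  have hA : ContDiff ℝ 1 A := hu.fderiv_right (le_refl _)
  have hAc : Continuous A := hA.continuous
  have hAfd : ∀ p, HasFDerivAt U (A p) p := fun p => (hUdiff p).hasFDerivAt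
  set B : ℝ × ℝ → (ℝ × ℝ →L[ℝ] (ℝ × ℝ →L[ℝ] ℝ)) := fderiv ℝ A with hBdef
  have hBc : Continuous B := hA.continuous_fderiv one_ne_zero
  have hBfd : ∀ p, HasFDerivAt A (B p) p := fun p => ((hA.differentiable one_ne_zero) p).hasFDerivAt
  have hBsymm : ∀ p v w, B p v w = B p w v := fun p v w =>
    second_derivative_symmetric hAfd (hBfd p) v w
  -- partial derivatives
  set ux : ℝ → ℝ → ℝ := fun s x => A (s, x) ((0:ℝ), (1:ℝ)) with huxdef
  set ut : ℝ → ℝ → ℝ := fun s x => A (s, x) ((1:ℝ), (0:ℝ)) with hutdef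
  have hcurve_x : ∀ (s x : ℝ), HasDerivAt (fun y => ((s, y) : ℝ × ℝ)) ((0:ℝ), (1:ℝ)) x :=
    fun s x => (hasDerivAt_const x s).prodMk (hasDerivAt_id x)
  have hcurve_t : ∀ (s x : ℝ), HasDerivAt (fun r => ((r, x) : ℝ × ℝ)) ((1:ℝ), (0:ℝ)) s :=
    fun s x => (hasDerivAt_id s).prodMk (hasDerivAt_const s x)
  have hd_x : ∀ s x, HasDerivAt (u s) (ux s x) x := by
    intro s x
    exact (hAfd (s, x)).comp_hasDerivAt x (hcurve_x s x)
  have hd_t : ∀ s x, HasDerivAt (fun r => u r x) (ut s x) s := by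
    intro s x
    exact (hAfd (s, x)).comp_hasDerivAt s (hcurve_t s x)
  have hux_eq : ∀ s x, deriv (u s) x = ux s x := fun s x => (hd_x s x).deriv
  have hut_eq : ∀ s x, deriv (fun r => u r x) s = ut s x := fun s x => (hd_t s x).deriv
  -- second-order partial derivatives
  set w : ℝ → ℝ → ℝ := fun s x => B (s, x) ((1:ℝ), (0:ℝ)) ((0:ℝ), (1:ℝ)) with hwdef
  set uxx : ℝ → ℝ → ℝ := fun s x => B (s, x) ((0:ℝ), (1:ℝ)) ((0:ℝ), (1:ℝ)) with huxxdef
  -- derivative in t of ux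
  have hd_ts : ∀ s x, HasDerivAt (fun r => ux r x) (w s x) s := by
    intro s x
    have h1 : HasDerivAt (fun r => A (r, x)) (B (s, x) ((1:ℝ), (0:ℝ))) s :=
      (hBfd (s, x)).comp_hasDerivAt s (hcurve_t s x)
    have h2 := h1.clm_apply (hasDerivAt_const s ((0:ℝ), (1:ℝ)))
    simpa using h2
  -- derivative in x of ut, equals w by symmetry of second derivatives
  have hd_xt : ∀ s x, HasDerivAt (fun y => ut s y) (w s x) x := by
    intro s x
    have h1 : HasDerivAt (fun y => A (s, y)) (B (s, x) ((0:ℝ), (1:ℝ))) x :=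
      (hBfd (s, x)).comp_hasDerivAt x (hcurve_x s x)
    have h2 := h1.clm_apply (hasDerivAt_const x ((1:ℝ), (0:ℝ)))
    simp only [map_zero, add_zero] at h2
    have : B (s, x) ((0:ℝ), (1:ℝ)) ((1:ℝ), (0:ℝ)) = w s x := hBsymm (s, x) _ _
    rwa [this] at h2
  have hd_xx : ∀ s x, HasDerivAt (fun y => ux s y) (uxx s x) x := by
    intro s x
    have h1 : HasDerivAt (fun y => A (s, y)) (B (s, x) ((0:ℝ), (1:ℝ))) x :=
      (hBfd (s, x)).comp_hasDerivAt x (hcurve_x s x)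
    have h2 := h1.clm_apply (hasDerivAt_const x ((0:ℝ), (1:ℝ)))
    simpa using h2
  have huxx_eq : ∀ s x, deriv (deriv (u s)) x = uxx s x := by
    intro s x
    have h : deriv (u s) = fun y => ux s y := funext fun y => hux_eq s y
    rw [h]
    exact (hd_xx s x).deriv
  -- continuity facts
  have hcu : Continuous fun p : ℝ × ℝ => u p.1 p.2 := hu.continuous
  have hcux : Continuous fun p : ℝ × ℝ => ux p.1 p.2 := by
    exact (hAc.comp continuous_id).clm_apply continuous_const
  have hcut : Continuous fun p : ℝ × ℝ => ut p.1 p.2 := by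
    exact (hAc.comp continuous_id).clm_apply continuous_const
  have hcw : Continuous fun p : ℝ × ℝ => w p.1 p.2 := by
    exact ((hBc.comp continuous_id).clm_apply continuous_const).clm_apply continuous_const
  have hcuxx : Continuous fun p : ℝ × ℝ => uxx p.1 p.2 := by
    exact ((hBc.comp continuous_id).clm_apply continuous_const).clm_apply continuous_const
  -- the t-derivative of the integrand
  set gt : ℝ → ℝ → ℝ := fun s x => ux s x * w s x - f (u s x) * ut s x with hgtdef
  have hcgt : Continuous fun p : ℝ × ℝ => gt p.1 p.2 := by
    exact (hcux.mul hcw).sub ((hf.comp hcu).mul hcut)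
  have hd_g : ∀ x s, HasDerivAt
      (fun r => (1/2 : ℝ) * (ux r x)^2 - F (u r x)) (gt s x) s := by
    intro x s
    have h1 : HasDerivAt (fun r => (1/2 : ℝ) * (ux r x)^2)
        ((1/2 : ℝ) * (2 * ux s x ^ 1 * w s x)) s :=
      ((hd_ts s x).pow 2).const_mul _
    have h2 : HasDerivAt (fun r => F (u r x)) (f (u s x) * ut s x) s :=
      (hF (u s x)).comp s (hd_t s x)
    have h3 := h1.sub h2
    refine h3.congr_deriv ?_
    simp only [hgtdef]; ring
  have hFc : Continuous F := continuous_iff_continuousAt.mpr fun y => (hF y).differentiableAt.continuousAt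
  -- a uniform bound for gt near t
  obtain ⟨C, hC⟩ : ∃ C, ∀ p ∈ Set.Icc (t - 1) (t + 1) ×ˢ Set.Icc (0:ℝ) 1,
      ‖gt p.1 p.2‖ ≤ C := by
    exact (((isCompact_Icc).prod (isCompact_Icc))).exists_bound_of_continuousOn
      hcgt.continuousOn
  -- differentiate under the integral sign
  have key := intervalIntegral.hasDerivAt_integral_of_dominated_loc_of_deriv_le
      (F := fun s x => (1/2 : ℝ) * (ux s x)^2 - F (u s x))
      (F' := fun s x => gt s x) (x₀ := t) (a := 0) (b := 1)
      (bound := fun _ => C) (μ := MeasureTheory.volume) (s := Metric.ball t 1) (Metric.ball_mem_nhds t one_pos)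
      ?_ ?_ ?_ ?_ ?_ ?_
  · -- conclude
    have hVeq : (fun s => ∫ x in (0:ℝ)..1, ((1/2 : ℝ) * (deriv (u s) x)^2 - F (u s x)))
        = fun s => ∫ x in (0:ℝ)..1, ((1/2 : ℝ) * (ux s x)^2 - F (u s x)) := by
      funext s
      simp only [hux_eq]
    rw [hVeq]
    have hD := key.2
    -- now rewrite the value of the derivative
    have hval : (∫ x in (0:ℝ)..1, gt t x) = -∫ x in (0:ℝ)..1, (deriv (fun s => u s x) t)^2 := by
      -- boundary values of ut
      have hut0 : ut t 0 = 0 := by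
        have h := hd_t t 0
        rw [show (fun r => u r 0) = fun _ : ℝ => (0:ℝ) from funext bc0] at h
        exact h.unique (hasDerivAt_const t 0)
      have hut1 : ut t 1 = 0 := by
        have h := hd_t t 1
        rw [show (fun r => u r 1) = fun _ : ℝ => (0:ℝ) from funext bc1] at h
        exact h.unique (hasDerivAt_const t 0)
      -- integrability of all integrands in x
      have hInt1 : IntervalIntegrable (fun x => uxx t x) MeasureTheory.volume 0 1 :=
        (hcuxx.comp (continuous_const.prodMk continuous_id)).intervalIntegrable 0 1
      have hInt2 : IntervalIntegrable (fun x => w t x) MeasureTheory.volume 0 1 :=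
        (hcw.comp (continuous_const.prodMk continuous_id)).intervalIntegrable 0 1
      -- integration by parts
      have hparts := intervalIntegral.integral_mul_deriv_eq_deriv_mul
        (a := 0) (b := 1)
        (u := fun x => ux t x) (u' := fun x => uxx t x)
        (v := fun x => ut t x) (v' := fun x => w t x)
        (fun x _ => hd_xx t x) (fun x _ => hd_xt t x) hInt1 hInt2
      simp only [hut0, hut1, mul_zero, zero_sub] at hparts
      -- split the integral
      have hIuxw : IntervalIntegrable (fun x => ux t x * w t x) MeasureTheory.volume 0 1 :=
        (((hcux.comp (continuous_const.prodMk continuous_id))).mul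
          (hcw.comp (continuous_const.prodMk continuous_id))).intervalIntegrable 0 1
      have hIfut : IntervalIntegrable (fun x => f (u t x) * ut t x) MeasureTheory.volume 0 1 :=
        (((hf.comp (hcu.comp (continuous_const.prodMk continuous_id)))).mul
          (hcut.comp (continuous_const.prodMk continuous_id))).intervalIntegrable 0 1
      have hsplit : (∫ x in (0:ℝ)..1, gt t x)
          = (∫ x in (0:ℝ)..1, ux t x * w t x) - ∫ x in (0:ℝ)..1, f (u t x) * ut t x :=
        intervalIntegral.integral_sub hIuxw hIfut
      have hIuxxut : IntervalIntegrable (fun x => uxx t x * ut t x) MeasureTheory.volume 0 1 :=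
        ((hcuxx.comp (continuous_const.prodMk continuous_id)).mul
          (hcut.comp (continuous_const.prodMk continuous_id))).intervalIntegrable 0 1
      have hrhs : (∫ x in (0:ℝ)..1, (deriv (fun s => u s x) t)^2)
          = (∫ x in (0:ℝ)..1, uxx t x * ut t x) + ∫ x in (0:ℝ)..1, f (u t x) * ut t x := by
        rw [← intervalIntegral.integral_add hIuxxut hIfut]
        apply intervalIntegral.integral_congr
        intro x hx
        rw [Set.uIcc_of_le (by norm_num : (0:ℝ) ≤ 1)] at hx
        have hpde := pde t x hx
        rw [hut_eq, huxx_eq] at hpde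
        show deriv (fun s => u s x) t ^ 2 = uxx t x * ut t x + f (u t x) * ut t x
        rw [hut_eq, hpde]
        ring
      rw [hsplit, hparts, hrhs]
      ring
    rw [← hval]
    exact hD
  · -- hF_meas
    exact Filter.Eventually.of_forall fun s =>
      ((continuous_const.mul ((hcux.comp (continuous_const.prodMk continuous_id)).pow 2)).sub
        (hFc.comp (hcu.comp (continuous_const.prodMk continuous_id)))).aestronglyMeasurable.restrict
  · -- hF_int
    exact ((continuous_const.mul ((hcux.comp (continuous_const.prodMk continuous_id)).pow 2)).sub
      (hFc.comp (hcu.comp (continuous_const.prodMk continuous_id)))).intervalIntegrable 0 1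
  · -- hF'_meas
    exact (hcgt.comp (continuous_const.prodMk continuous_id)).aestronglyMeasurable.restrict
  · -- h_bound
    refine Filter.Eventually.of_forall fun x hx s hs => ?_
    apply hC (s, x)
    constructor
    · have : |s - t| < 1 := by simpa [Real.dist_eq] using Metric.mem_ball.mp hs
      have h1 := abs_lt.mp this
      constructor <;> linarith [h1.1, h1.2]
    · have hx' : x ∈ Set.Ioc (0:ℝ) 1 := by
        simpa [Set.uIoc_of_le (by norm_num : (0:ℝ) ≤ 1)] using hx
      exact ⟨le_of_lt hx'.1, hx'.2⟩
  · -- bound_integrable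
    exact intervalIntegrable_const
  · -- h_diff
    exact Filter.Eventually.of_forall fun x _ s _ => hd_g x s
end

section
/- Let L : ℝ³ → ℝ be C² (arguments written L(x,u,p)) satisfying the first-order PDE L_u − L_{xp} − p·L_{up} + f(x,u,p)·L_{pp} = 0 for all (x,u,p), where f is continuous. If u : ℝ × [0,1] → ℝ is a C² solution of u_t = u_xx + f(x,u,u_x) with u(t,0) = u(t,1) = 0 for all t, then V(t) = ∫₀¹ L(x, u(t,x), u_x(t,x)) dx satisfies V'(t) = −∫₀¹ L_{pp}(x, u, u_x)·(u_t)² dx. -/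
open MeasureTheory intervalIntegral Metric Set Function

section Helpers

variable {E : Type*} [NormedAddCommGroup E] [NormedSpace ℝ E]

private lemma line3_1 {F : ℝ × ℝ × ℝ → E} {x y p : ℝ}
    (hF : DifferentiableAt ℝ F (x, y, p)) :
    HasDerivAt (fun w => F (w, y, p)) (fderiv ℝ F (x, y, p) (1, 0, 0)) x :=
  hF.hasFDerivAt.comp_hasDerivAt x
    ((hasDerivAt_id x).prodMk ((hasDerivAt_const x y).prodMk (hasDerivAt_const x p)))

private lemma line3_2 {F : ℝ × ℝ × ℝ → E} {x y p : ℝ}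
    (hF : DifferentiableAt ℝ F (x, y, p)) :
    HasDerivAt (fun w => F (x, w, p)) (fderiv ℝ F (x, y, p) (0, 1, 0)) y :=
  hF.hasFDerivAt.comp_hasDerivAt y
    ((hasDerivAt_const y x).prodMk ((hasDerivAt_id y).prodMk (hasDerivAt_const y p)))

private lemma line3_3 {F : ℝ × ℝ × ℝ → E} {x y p : ℝ}
    (hF : DifferentiableAt ℝ F (x, y, p)) :
    HasDerivAt (fun w => F (x, y, w)) (fderiv ℝ F (x, y, p) (0, 0, 1)) p :=
  hF.hasFDerivAt.comp_hasDerivAt p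
    ((hasDerivAt_const p x).prodMk ((hasDerivAt_const p y).prodMk (hasDerivAt_id p)))

private lemma line2_1 {U : ℝ × ℝ → E} {t x : ℝ}
    (hU : DifferentiableAt ℝ U (t, x)) :
    HasDerivAt (fun s => U (s, x)) (fderiv ℝ U (t, x) (1, 0)) t :=
  hU.hasFDerivAt.comp_hasDerivAt t ((hasDerivAt_id t).prodMk (hasDerivAt_const t x))

private lemma line2_2 {U : ℝ × ℝ → E} {t x : ℝ}
    (hU : DifferentiableAt ℝ U (t, x)) :
    HasDerivAt (fun s => U (t, s)) (fderiv ℝ U (t, x) (0, 1)) x :=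
  hU.hasFDerivAt.comp_hasDerivAt x ((hasDerivAt_const x t).prodMk (hasDerivAt_id x))

end Helpers

noncomputable section Defs

private def pF (L : ℝ → ℝ → ℝ → ℝ) : ℝ × ℝ × ℝ → ℝ := fun v => L v.1 v.2.1 v.2.2
private def pLu (L : ℝ → ℝ → ℝ → ℝ) : ℝ × ℝ × ℝ → ℝ := fun v => fderiv ℝ (pF L) v (0, 1, 0)
private def pLp (L : ℝ → ℝ → ℝ → ℝ) : ℝ × ℝ × ℝ → ℝ := fun v => fderiv ℝ (pF L) v (0, 0, 1)
private def pLxp (L : ℝ → ℝ → ℝ → ℝ) : ℝ × ℝ × ℝ → ℝ := fun v => fderiv ℝ (pLp L) v (1, 0, 0)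
private def pLup (L : ℝ → ℝ → ℝ → ℝ) : ℝ × ℝ × ℝ → ℝ := fun v => fderiv ℝ (pLp L) v (0, 1, 0)
private def pLpp (L : ℝ → ℝ → ℝ → ℝ) : ℝ × ℝ × ℝ → ℝ := fun v => fderiv ℝ (pLp L) v (0, 0, 1)

private def pU (u : ℝ → ℝ → ℝ) : ℝ × ℝ → ℝ := Function.uncurry u
private def pW (u : ℝ → ℝ → ℝ) : ℝ × ℝ → (ℝ × ℝ →L[ℝ] ℝ) := fderiv ℝ (pU u)
private def put (u : ℝ → ℝ → ℝ) (t x : ℝ) : ℝ := pW u (t, x) (1, 0)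
private def pux (u : ℝ → ℝ → ℝ) (t x : ℝ) : ℝ := pW u (t, x) (0, 1)
private def putx (u : ℝ → ℝ → ℝ) (t x : ℝ) : ℝ := fderiv ℝ (pW u) (t, x) (1, 0) (0, 1)
private def puxx (u : ℝ → ℝ → ℝ) (t x : ℝ) : ℝ := fderiv ℝ (pW u) (t, x) (0, 1) (0, 1)

end Defs

section LLemmas

variable {L : ℝ → ℝ → ℝ → ℝ} (hL : ContDiff ℝ 2 (pF L))

private lemma hdiffF (hL : ContDiff ℝ 2 (pF L)) : Differentiable ℝ (pF L) :=
  hL.differentiable (by norm_num)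

private lemma hLp1 (hL : ContDiff ℝ 2 (pF L)) : ContDiff ℝ 1 (pLp L) :=
  (hL.fderiv_right (by norm_num)).clm_apply contDiff_const

private lemma hLu1 (hL : ContDiff ℝ 2 (pF L)) : ContDiff ℝ 1 (pLu L) :=
  (hL.fderiv_right (by norm_num)).clm_apply contDiff_const

private lemma eq_Lu (hL : ContDiff ℝ 2 (pF L)) (x y p : ℝ) :
    deriv (fun w => L x w p) y = pLu L (x, y, p) :=
  (line3_2 ((hdiffF hL) _)).deriv

private lemma eq_Lp (hL : ContDiff ℝ 2 (pF L)) (x y p : ℝ) :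
    deriv (fun w => L x y w) p = pLp L (x, y, p) :=
  (line3_3 ((hdiffF hL) _)).deriv

private lemma eq_Lxp (hL : ContDiff ℝ 2 (pF L)) (x y p : ℝ) :
    deriv (fun z => deriv (fun w => L z y w) p) x = pLxp L (x, y, p) := by
  have h : (fun z => deriv (fun w => L z y w) p) = fun z => pLp L (z, y, p) :=
    funext fun z => eq_Lp hL z y p
  rw [h]
  exact (line3_1 (((hLp1 hL).differentiable one_ne_zero) _)).deriv

private lemma eq_Lup (hL : ContDiff ℝ 2 (pF L)) (x y p : ℝ) :
    deriv (fun w => deriv (fun w' => L x w w') p) y = pLup L (x, y, p) := by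
  have h : (fun w => deriv (fun w' => L x w w') p) = fun w => pLp L (x, w, p) :=
    funext fun w => eq_Lp hL x w p
  rw [h]
  exact (line3_2 (((hLp1 hL).differentiable one_ne_zero) _)).deriv

private lemma eq_Lpp (hL : ContDiff ℝ 2 (pF L)) (x y p : ℝ) :
    deriv (fun w => deriv (fun w' => L x y w') w) p = pLpp L (x, y, p) := by
  have h : (fun w => deriv (fun w' => L x y w') w) = fun w => pLp L (x, y, w) :=
    funext fun w => eq_Lp hL x y w
  rw [h]
  exact (line3_3 (((hLp1 hL).differentiable one_ne_zero) _)).deriv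

private lemma fderivF_decomp (hL : ContDiff ℝ 2 (pF L)) (v : ℝ × ℝ × ℝ) (a b : ℝ) :
    fderiv ℝ (pF L) v (0, a, b) = a * pLu L v + b * pLp L v := by
  have h : ((0, a, b) : ℝ × ℝ × ℝ) = a • ((0, 1, 0) : ℝ × ℝ × ℝ) + b • (0, 0, 1) := by
    simp [Prod.ext_iff]
  rw [h, map_add, ContinuousLinearMap.map_smul, ContinuousLinearMap.map_smul, smul_eq_mul, smul_eq_mul]; rfl

private lemma fderivLp_decomp (hL : ContDiff ℝ 2 (pF L)) (v : ℝ × ℝ × ℝ) (a b : ℝ) :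
    fderiv ℝ (pLp L) v (1, a, b) = pLxp L v + a * pLup L v + b * pLpp L v := by
  have h : ((1, a, b) : ℝ × ℝ × ℝ) =
      ((1, 0, 0) : ℝ × ℝ × ℝ) + a • ((0, 1, 0) : ℝ × ℝ × ℝ) + b • (0, 0, 1) := by
    simp [Prod.ext_iff]
  rw [h, map_add, map_add, ContinuousLinearMap.map_smul, ContinuousLinearMap.map_smul, smul_eq_mul, smul_eq_mul]; rfl

end LLemmas
section ULemmas

variable {u : ℝ → ℝ → ℝ}

private lemma hdiffU (hu : ContDiff ℝ 2 (pU u)) : Differentiable ℝ (pU u) :=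
  hu.differentiable (by norm_num)

private lemma hW1 (hu : ContDiff ℝ 2 (pU u)) : ContDiff ℝ 1 (pW u) :=
  hu.fderiv_right (by norm_num)

private lemma hdiffW (hu : ContDiff ℝ 2 (pU u)) : Differentiable ℝ (pW u) :=
  (hW1 hu).differentiable one_ne_zero

private lemma Wsymm (hu : ContDiff ℝ 2 (pU u)) (q : ℝ × ℝ) (a b : ℝ × ℝ) :
    fderiv ℝ (pW u) q a b = fderiv ℝ (pW u) q b a :=
  second_derivative_symmetric (fun y => ((hdiffU hu) y).hasFDerivAt)
    ((hdiffW hu) q).hasFDerivAt a b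

private lemma eq_ux (hu : ContDiff ℝ 2 (pU u)) (t x : ℝ) :
    deriv (u t) x = pux u t x :=
  (line2_2 ((hdiffU hu) _)).deriv

private lemma eq_ut (hu : ContDiff ℝ 2 (pU u)) (t x : ℝ) :
    deriv (fun s => u s x) t = put u t x :=
  (line2_1 ((hdiffU hu) _)).deriv

private lemma hd_u_t (hu : ContDiff ℝ 2 (pU u)) (t x : ℝ) :
    HasDerivAt (fun s => u s x) (put u t x) t :=
  line2_1 ((hdiffU hu) _)

private lemma hd_u_x (hu : ContDiff ℝ 2 (pU u)) (t x : ℝ) :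
    HasDerivAt (u t) (pux u t x) x :=
  line2_2 ((hdiffU hu) _)

private lemma hd_ux_t (hu : ContDiff ℝ 2 (pU u)) (t x : ℝ) :
    HasDerivAt (fun s => pux u s x) (putx u t x) t := by
  have h := (line2_1 (E := ℝ × ℝ →L[ℝ] ℝ) ((hdiffW hu) (t, x))).clm_apply
    (hasDerivAt_const t ((0 : ℝ), (1 : ℝ)))
  simpa [putx, pux] using h

private lemma hd_ux_x (hu : ContDiff ℝ 2 (pU u)) (t x : ℝ) :
    HasDerivAt (fun x' => pux u t x') (puxx u t x) x := by
  have h := (line2_2 (E := ℝ × ℝ →L[ℝ] ℝ) ((hdiffW hu) (t, x))).clm_apply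
    (hasDerivAt_const x ((0 : ℝ), (1 : ℝ)))
  simpa [puxx, pux] using h

private lemma hd_ut_x (hu : ContDiff ℝ 2 (pU u)) (t x : ℝ) :
    HasDerivAt (fun x' => put u t x') (putx u t x) x := by
  have h := (line2_2 (E := ℝ × ℝ →L[ℝ] ℝ) ((hdiffW hu) (t, x))).clm_apply
    (hasDerivAt_const x ((1 : ℝ), (0 : ℝ)))
  have h2 : fderiv ℝ (pW u) (t, x) (0, 1) (1, 0) = putx u t x := by
    rw [Wsymm hu]; rfl
  simpa [put, h2] using h

private lemma eq_uxx (hu : ContDiff ℝ 2 (pU u)) (t x : ℝ) :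
    deriv (deriv (u t)) x = puxx u t x := by
  have h : deriv (u t) = fun x' => pux u t x' := funext fun x' => eq_ux hu t x'
  rw [h]
  exact (hd_ux_x hu t x).deriv

private lemma cont_u (hu : ContDiff ℝ 2 (pU u)) :
    Continuous fun q : ℝ × ℝ => u q.1 q.2 := hu.continuous

private lemma cont_ut (hu : ContDiff ℝ 2 (pU u)) :
    Continuous fun q : ℝ × ℝ => put u q.1 q.2 :=
  (hW1 hu).continuous.clm_apply continuous_const

private lemma cont_ux (hu : ContDiff ℝ 2 (pU u)) :
    Continuous fun q : ℝ × ℝ => pux u q.1 q.2 :=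
  (hW1 hu).continuous.clm_apply continuous_const

private lemma cont_utx (hu : ContDiff ℝ 2 (pU u)) :
    Continuous fun q : ℝ × ℝ => putx u q.1 q.2 :=
  (((hW1 hu).continuous_fderiv one_ne_zero).clm_apply continuous_const).clm_apply continuous_const

private lemma cont_uxx (hu : ContDiff ℝ 2 (pU u)) :
    Continuous fun q : ℝ × ℝ => puxx u q.1 q.2 :=
  (((hW1 hu).continuous_fderiv one_ne_zero).clm_apply continuous_const).clm_apply continuous_const

end ULemmas
/-- Matano's Lyapunov function: if the Lagrangian `L(x,u,p)` satisfies
`L_u − L_{xp} − p·L_{up} + f·L_{pp} = 0`, then `V(t) = ∫₀¹ L(x,u,u_x) dx` satisfies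
`V'(t) = −∫₀¹ L_{pp}(x,u,u_x)·u_t² dx` along Dirichlet solutions of
`u_t = u_xx + f(x,u,u_x)`. -/
theorem stmt2
    (f : ℝ → ℝ → ℝ → ℝ) (hf : Continuous fun v : ℝ × ℝ × ℝ => f v.1 v.2.1 v.2.2)
    (L : ℝ → ℝ → ℝ → ℝ) (hL : ContDiff ℝ 2 fun v : ℝ × ℝ × ℝ => L v.1 v.2.1 v.2.2)
    (hpde : ∀ x y p,
      deriv (fun w => L x w p) y
        - deriv (fun z => deriv (fun w => L z y w) p) x
        - p * deriv (fun w => deriv (fun w' => L x w w') p) y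
        + f x y p * deriv (fun w => deriv (fun w' => L x y w') w) p = 0)
    (u : ℝ → ℝ → ℝ) (hu : ContDiff ℝ 2 (Function.uncurry u))
    (hux : ∀ t, ContDiff ℝ 1 (deriv (u t)))
    (upde : ∀ t, ∀ x ∈ Set.Icc (0:ℝ) 1,
      deriv (fun s => u s x) t = deriv (deriv (u t)) x + f x (u t x) (deriv (u t) x))
    (bc0 : ∀ t, u t 0 = 0) (bc1 : ∀ t, u t 1 = 0) :
    ∀ t, HasDerivAt
      (fun s => ∫ x in (0:ℝ)..1, L x (u s x) (deriv (u s) x))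
      (-∫ x in (0:ℝ)..1,
        deriv (fun w => deriv (fun w' => L x (u t x) w') w) (deriv (u t) x)
          * (deriv (fun s => u s x) t)^2) t := by
  intro t
  have hL' : ContDiff ℝ 2 (pF L) := hL
  have hu' : ContDiff ℝ 2 (pU u) := hu
  -- the PDE for L in terms of partial derivatives
  have pde' : ∀ x y p : ℝ,
      pLu L (x, y, p) - pLxp L (x, y, p) - p * pLup L (x, y, p)
        + f x y p * pLpp L (x, y, p) = 0 := by
    intro x y p
    have h := hpde x y p
    rwa [eq_Lu hL', eq_Lxp hL', eq_Lup hL', eq_Lpp hL'] at h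
  -- the PDE for u in terms of partial derivatives
  have upde' : ∀ x ∈ Set.Icc (0:ℝ) 1,
      put u t x = puxx u t x + f x (u t x) (pux u t x) := by
    intro x hx
    have h := upde t x hx
    rwa [eq_ut hu', eq_uxx hu', eq_ux hu'] at h
  -- boundary values of u_t
  have hbt0 : put u t 0 = 0 := by
    have h := (eq_ut hu' t 0).symm
    have h0 : (fun s => u s 0) = fun _ : ℝ => (0:ℝ) := funext bc0
    rw [h0] at h
    simpa using h
  have hbt1 : put u t 1 = 0 := by
    have h := (eq_ut hu' t 1).symm
    have h0 : (fun s => u s 1) = fun _ : ℝ => (0:ℝ) := funext bc1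
    rw [h0] at h
    simpa using h
  -- the t-derivative of the integrand
  have contG : Continuous fun q : ℝ × ℝ =>
      pLu L (q.2, u q.1 q.2, pux u q.1 q.2) * put u q.1 q.2 +
      pLp L (q.2, u q.1 q.2, pux u q.1 q.2) * putx u q.1 q.2 := by
    have hc : Continuous fun q : ℝ × ℝ => ((q.2, u q.1 q.2, pux u q.1 q.2) : ℝ × ℝ × ℝ) :=
      continuous_snd.prodMk ((cont_u hu').prodMk (cont_ux hu'))
    exact (((hLu1 hL').continuous.comp hc).mul (cont_ut hu')).add
      (((hLp1 hL').continuous.comp hc).mul (cont_utx hu'))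
  have hGd : ∀ s x : ℝ, HasDerivAt (fun s' => L x (u s' x) (deriv (u s') x))
      (pLu L (x, u s x, pux u s x) * put u s x +
       pLp L (x, u s x, pux u s x) * putx u s x) s := by
    intro s x
    have hfun : (fun s' => L x (u s' x) (deriv (u s') x))
        = fun s' => pF L (x, u s' x, pux u s' x) := by
      funext s'; rw [eq_ux hu']; rfl
    rw [hfun]
    have hcurve : HasDerivAt (fun s' => ((x, u s' x, pux u s' x) : ℝ × ℝ × ℝ))
        (0, put u s x, putx u s x) s :=
      (hasDerivAt_const s x).prodMk ((hd_u_t hu' s x).prodMk (hd_ux_t hu' s x))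
    have h := ((hdiffF hL') _).hasFDerivAt.comp_hasDerivAt s hcurve
    rw [fderivF_decomp hL'] at h
    have hc : pLu L (x, u s x, pux u s x) * put u s x +
        pLp L (x, u s x, pux u s x) * putx u s x
        = put u s x * pLu L (x, u s x, pux u s x) +
          putx u s x * pLp L (x, u s x, pux u s x) := by ring
    rw [hc]
    exact h
  have contInteg : ∀ s : ℝ, Continuous fun x => L x (u s x) (deriv (u s) x) := by
    intro s
    have hfun : (fun x => L x (u s x) (deriv (u s) x))
        = fun x => pF L (x, u s x, pux u s x) := by
      funext x; rw [eq_ux hu']; rfl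
    rw [hfun]
    have hc : Continuous fun x : ℝ => ((x, u s x, pux u s x) : ℝ × ℝ × ℝ) :=
      continuous_id.prodMk
        (((cont_u hu').comp (continuous_const.prodMk continuous_id)).prodMk
          ((cont_ux hu').comp (continuous_const.prodMk continuous_id)))
    exact hL'.continuous.comp hc
  -- differentiation under the integral sign
  have key : HasDerivAt (fun s => ∫ x in (0:ℝ)..1, L x (u s x) (deriv (u s) x))
      (∫ x in (0:ℝ)..1,
        pLu L (x, u t x, pux u t x) * put u t x +
        pLp L (x, u t x, pux u t x) * putx u t x) t := by
    obtain ⟨C, hC⟩ := ((isCompact_closedBall t 1).prod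
      (isCompact_uIcc (a := (0:ℝ)) (b := 1))).exists_bound_of_continuousOn contG.continuousOn
    refine (intervalIntegral.hasDerivAt_integral_of_dominated_loc_of_deriv_le
      (F := fun s x => L x (u s x) (deriv (u s) x))
      (F' := fun s x => pLu L (x, u s x, pux u s x) * put u s x +
        pLp L (x, u s x, pux u s x) * putx u s x)
      (bound := fun _ => C) (ball_mem_nhds t one_pos)
      (Filter.Eventually.of_forall fun s => (contInteg s).aestronglyMeasurable)
      ((contInteg t).intervalIntegrable 0 1)
      ?_ ?_ (intervalIntegrable_const) ?_).2
    · exact (contG.comp (continuous_const.prodMk continuous_id)).aestronglyMeasurable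
    · refine Filter.Eventually.of_forall fun x hx s hs => ?_
      exact hC (s, x) ⟨ball_subset_closedBall hs, Set.uIoc_subset_uIcc hx⟩
    · exact Filter.Eventually.of_forall fun x _ s _ => hGd s x
  -- integration by parts
  have ccurve : Continuous fun x : ℝ => ((x, u t x, pux u t x) : ℝ × ℝ × ℝ) :=
    continuous_id.prodMk
      (((cont_u hu').comp (continuous_const.prodMk continuous_id)).prodMk
        ((cont_ux hu').comp (continuous_const.prodMk continuous_id)))
  have cput : Continuous fun x : ℝ => put u t x :=
    (cont_ut hu').comp (continuous_const.prodMk continuous_id)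
  have cputx : Continuous fun x : ℝ => putx u t x :=
    (cont_utx hu').comp (continuous_const.prodMk continuous_id)
  have cpux : Continuous fun x : ℝ => pux u t x :=
    (cont_ux hu').comp (continuous_const.prodMk continuous_id)
  have cpuxx : Continuous fun x : ℝ => puxx u t x :=
    (cont_uxx hu').comp (continuous_const.prodMk continuous_id)
  have cg' : Continuous fun x : ℝ =>
      pLxp L (x, u t x, pux u t x) + pux u t x * pLup L (x, u t x, pux u t x)
        + puxx u t x * pLpp L (x, u t x, pux u t x) := by
    have hfd : Continuous fun x : ℝ => fderiv ℝ (pLp L) (x, u t x, pux u t x) :=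
      ((hLp1 hL').continuous_fderiv one_ne_zero).comp ccurve
    exact ((hfd.clm_apply continuous_const).add
        (cpux.mul (hfd.clm_apply continuous_const))).add
      (cpuxx.mul (hfd.clm_apply continuous_const))
  have hg : ∀ x : ℝ, HasDerivAt (fun x' => pLp L (x', u t x', pux u t x'))
      (pLxp L (x, u t x, pux u t x) + pux u t x * pLup L (x, u t x, pux u t x)
        + puxx u t x * pLpp L (x, u t x, pux u t x)) x := by
    intro x
    have hcurve : HasDerivAt (fun x' => ((x', u t x', pux u t x') : ℝ × ℝ × ℝ))
        (1, pux u t x, puxx u t x) x :=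
      (hasDerivAt_id x).prodMk ((hd_u_x hu' t x).prodMk (hd_ux_x hu' t x))
    have h := (((hLp1 hL').differentiable one_ne_zero) _).hasFDerivAt.comp_hasDerivAt x hcurve
    rwa [fderivLp_decomp hL'] at h
  have ibp := intervalIntegral.integral_mul_deriv_eq_deriv_mul
    (u := fun x => pLp L (x, u t x, pux u t x))
    (u' := fun x => pLxp L (x, u t x, pux u t x) + pux u t x * pLup L (x, u t x, pux u t x)
        + puxx u t x * pLpp L (x, u t x, pux u t x))
    (v := fun x => put u t x) (v' := fun x => putx u t x)
    (fun x _ => hg x) (fun x _ => hd_ut_x hu' t x)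
    (cg'.intervalIntegrable 0 1) (cputx.intervalIntegrable 0 1)
  simp only [hbt0, hbt1, mul_zero, sub_zero, zero_sub] at ibp
  -- integrabilities
  have intA : IntervalIntegrable (fun x => pLu L (x, u t x, pux u t x) * put u t x)
      volume 0 1 :=
    (((hLu1 hL').continuous.comp ccurve).mul cput).intervalIntegrable 0 1
  have intB : IntervalIntegrable (fun x => pLp L (x, u t x, pux u t x) * putx u t x)
      volume 0 1 :=
    (((hLp1 hL').continuous.comp ccurve).mul cputx).intervalIntegrable 0 1
  have intg'h : IntervalIntegrable (fun x =>
      (pLxp L (x, u t x, pux u t x) + pux u t x * pLup L (x, u t x, pux u t x)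
        + puxx u t x * pLpp L (x, u t x, pux u t x)) * put u t x) volume 0 1 :=
    (cg'.mul cput).intervalIntegrable 0 1
  -- rewrite the target integral
  have e1 : (∫ x in (0:ℝ)..1,
        deriv (fun w => deriv (fun w' => L x (u t x) w') w) (deriv (u t) x)
          * (deriv (fun s => u s x) t)^2)
      = ∫ x in (0:ℝ)..1, pLpp L (x, u t x, pux u t x) * (put u t x)^2 :=
    intervalIntegral.integral_congr fun x _ => by
      rw [eq_ux hu', eq_ut hu', eq_Lpp hL']
  have e2 : (∫ x in (0:ℝ)..1, pLpp L (x, u t x, pux u t x) * (put u t x)^2)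
      = -∫ x in (0:ℝ)..1,
          (pLu L (x, u t x, pux u t x) * put u t x
            - (pLxp L (x, u t x, pux u t x) + pux u t x * pLup L (x, u t x, pux u t x)
                + puxx u t x * pLpp L (x, u t x, pux u t x)) * put u t x) := by
    rw [← intervalIntegral.integral_neg]
    refine intervalIntegral.integral_congr fun x hx => ?_
    have hx' : x ∈ Set.Icc (0:ℝ) 1 := by rwa [Set.uIcc_of_le zero_le_one] at hx
    have h1 := pde' x (u t x) (pux u t x)
    have h2 := upde' x hx'
    linear_combination put u t x * h1
      + pLpp L (x, u t x, pux u t x) * put u t x * h2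
  rw [e1, e2, neg_neg]
  have e3 : (∫ x in (0:ℝ)..1,
        (pLu L (x, u t x, pux u t x) * put u t x
          - (pLxp L (x, u t x, pux u t x) + pux u t x * pLup L (x, u t x, pux u t x)
              + puxx u t x * pLpp L (x, u t x, pux u t x)) * put u t x))
      = ∫ x in (0:ℝ)..1,
          pLu L (x, u t x, pux u t x) * put u t x +
          pLp L (x, u t x, pux u t x) * putx u t x := by
    rw [intervalIntegral.integral_sub intA intg'h,
      intervalIntegral.integral_add intA intB, ibp]
    ring
  rw [e3]
  exact key
end

section
/- Let f̄ : ℝ² → ℝ be C¹ with globally defined flow Ψ of dq/du = −f̄(u,q). Define F_q(u,q) = ∫₀ᵘ f̄_q(u₁, Ψ^{u₁,u}(q)) du₁, F(u) = ∫₀ᵘ f̄(u₁,0)·exp(F_q(u₁,0)) du₁, L(u,p) = ∫₀ᵖ ∫₀^{p₁} exp(F_q(u, p₂²/2)) dp₂ dp₁ − F(u), and φ(u,p) = ∫₀ᵖ Ψ^{0,u}_q(p₂²/2) dp₂. Then L(u,p) = p·φ(u,p) − Ψ^{0,u}(p²/2) for all (u,p). -/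
open Function Set Filter MeasureTheory intervalIntegral
open scoped Topology

section Aux
variable {fbar : ℝ → ℝ → ℝ} {Ψ : ℝ → ℝ → ℝ → ℝ}

/-- trajectories are continuous in time -/
lemma traj_cont (hflow : ∀ u₀ q₀ u₁, HasDerivAt (fun v => Ψ v u₀ q₀) (-(fbar u₁ (Ψ u₁ u₀ q₀))) u₁)
    (u q : ℝ) : Continuous (fun v => Ψ v u q) := by
  have : Differentiable ℝ (fun v => Ψ v u q) := fun v => (hflow u q v).differentiableAt
  exact this.continuous

/-- left inverse -/
lemma flow_leftInv (hid : ∀ u q, Ψ u u q = q) (hcocycle : ∀ u₂ u₁ u₀ q, Ψ u₂ u₁ (Ψ u₁ u₀ q) = Ψ u₂ u₀ q)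
    (v u : ℝ) : Function.LeftInverse (fun q => Ψ u v q) (fun q => Ψ v u q) := by
  intro q; simp [hcocycle, hid]

lemma flow_inj (hid : ∀ u q, Ψ u u q = q) (hcocycle : ∀ u₂ u₁ u₀ q, Ψ u₂ u₁ (Ψ u₁ u₀ q) = Ψ u₂ u₀ q)
    (v u : ℝ) : Function.Injective (fun q => Ψ v u q) :=
  (flow_leftInv hid hcocycle v u).injective

lemma flow_surj (hid : ∀ u q, Ψ u u q = q) (hcocycle : ∀ u₂ u₁ u₀ q, Ψ u₂ u₁ (Ψ u₁ u₀ q) = Ψ u₂ u₀ q)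
    (v u : ℝ) : Function.Surjective (fun q => Ψ v u q) :=
  (flow_leftInv hid hcocycle u v).surjective

/-- strict monotonicity in the initial value -/
lemma flow_mono (hflow : ∀ u₀ q₀ u₁, HasDerivAt (fun v => Ψ v u₀ q₀) (-(fbar u₁ (Ψ u₁ u₀ q₀))) u₁)
    (hid : ∀ u q, Ψ u u q = q) (hcocycle : ∀ u₂ u₁ u₀ q, Ψ u₂ u₁ (Ψ u₁ u₀ q) = Ψ u₂ u₀ q)
    (v u : ℝ) : StrictMono (fun q => Ψ v u q) := by
  intro q q' hqq'
  by_contra hle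
  push_neg at hle
  -- D w = Ψ w u q' - Ψ w u q is continuous, nonzero, positive at u, nonpositive at v
  set D : ℝ → ℝ := fun w => Ψ w u q' - Ψ w u q with hD
  have hcont : Continuous D := (traj_cont hflow u q').sub (traj_cont hflow u q)
  have hne : ∀ w, D w ≠ 0 := by
    intro w h
    have : Ψ w u q' = Ψ w u q := by linarith [sub_eq_zero.mp h]
    exact absurd (flow_inj hid hcocycle w u this) (ne_of_gt hqq')
  have hu : 0 < D u := by simp [hD, hid]; linarith
  have hv : D v ≤ 0 := by simp [hD]; linarith
  have : (0:ℝ) ∈ Set.uIcc (D v) (D u) :=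
    Set.mem_uIcc.mpr (Or.inl ⟨hv, le_of_lt hu⟩)
  obtain ⟨w, _, hw⟩ := intermediate_value_uIcc (a := v) (b := u) (hcont.continuousOn) this
  exact hne w hw

/-- continuity in the initial value -/
lemma flow_cont_q (hflow : ∀ u₀ q₀ u₁, HasDerivAt (fun v => Ψ v u₀ q₀) (-(fbar u₁ (Ψ u₁ u₀ q₀))) u₁)
    (hid : ∀ u q, Ψ u u q = q) (hcocycle : ∀ u₂ u₁ u₀ q, Ψ u₂ u₁ (Ψ u₁ u₀ q) = Ψ u₂ u₀ q)
    (v u : ℝ) : Continuous (fun q => Ψ v u q) :=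
  (flow_mono hflow hid hcocycle v u).monotone.continuous_of_surjective (flow_surj hid hcocycle v u)

end Aux

section Aux2
variable {fbar : ℝ → ℝ → ℝ} {Ψ : ℝ → ℝ → ℝ → ℝ}
variable (hflow : ∀ u₀ q₀ u₁, HasDerivAt (fun v => Ψ v u₀ q₀) (-(fbar u₁ (Ψ u₁ u₀ q₀))) u₁)
variable (hid : ∀ u q, Ψ u u q = q)
variable (hcocycle : ∀ u₂ u₁ u₀ q, Ψ u₂ u₁ (Ψ u₁ u₀ q) = Ψ u₂ u₀ q)

include hflow hid hcocycle

/-- continuity in the initial time -/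
lemma flow_cont_u (w q : ℝ) : Continuous (fun u => Ψ w u q) := by
  rw [continuous_iff_continuousAt]
  intro u₀
  apply tendsto_order.2
  constructor
  · intro a ha
    have h1 : Ψ u₀ w a < q := by
      calc Ψ u₀ w a < Ψ u₀ w (Ψ w u₀ q) := flow_mono hflow hid hcocycle u₀ w ha
        _ = q := flow_leftInv hid hcocycle w u₀ q
    have hev : ∀ᶠ u in 𝓝 u₀, Ψ u w a < q :=
      ((traj_cont hflow w a).continuousAt (x := u₀)).eventually_lt_const h1
    filter_upwards [hev] with u hu
    have h2 : Ψ u w (Ψ w u q) = q := flow_leftInv hid hcocycle w u q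
    have : Ψ u w a < Ψ u w (Ψ w u q) := by rw [h2]; exact hu
    exact (flow_mono hflow hid hcocycle u w).lt_iff_lt.mp this
  · intro b hb
    have h1 : q < Ψ u₀ w b := by
      calc q = Ψ u₀ w (Ψ w u₀ q) := (flow_leftInv hid hcocycle w u₀ q).symm
        _ < Ψ u₀ w b := flow_mono hflow hid hcocycle u₀ w hb
    have hev : ∀ᶠ u in 𝓝 u₀, q < Ψ u w b :=
      ((traj_cont hflow w b).continuousAt (x := u₀)).eventually_const_lt h1
    filter_upwards [hev] with u hu
    have h2 : Ψ u w (Ψ w u q) = q := flow_leftInv hid hcocycle w u q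
    have : Ψ u w (Ψ w u q) < Ψ u w b := by rw [h2]; exact hu
    exact (flow_mono hflow hid hcocycle u w).lt_iff_lt.mp this

/-- joint continuity in (time, initial value) -/
lemma flow_cont_vq (u : ℝ) : Continuous (fun p : ℝ × ℝ => Ψ p.1 u p.2) := by
  rw [continuous_iff_continuousAt]
  rintro ⟨v₀, y₀⟩
  apply tendsto_order.2
  constructor
  · intro a ha
    have hcq := (flow_cont_q hflow hid hcocycle v₀ u).continuousAt (x := y₀)
    obtain ⟨δ, hδpos, hδ⟩ := Metric.eventually_nhds_iff.mp (hcq.eventually_const_lt ha)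
    have hy : a < Ψ v₀ u (y₀ - δ/2) := hδ (by rw [Real.dist_eq]; rw [abs_of_nonpos (by linarith)]; linarith)
    have hev : ∀ᶠ v in 𝓝 v₀, a < Ψ v u (y₀ - δ/2) :=
      ((traj_cont hflow u (y₀ - δ/2)).continuousAt (x := v₀)).eventually_const_lt hy
    have hev2 : ∀ᶠ y in 𝓝 y₀, y₀ - δ/2 < y :=
      eventually_gt_nhds (by linarith)
    filter_upwards [prod_mem_nhds hev hev2] with p hp
    calc a < Ψ p.1 u (y₀ - δ/2) := hp.1
      _ ≤ Ψ p.1 u p.2 := (flow_mono hflow hid hcocycle p.1 u).monotone hp.2.le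
  · intro b hb
    have hcq := (flow_cont_q hflow hid hcocycle v₀ u).continuousAt (x := y₀)
    obtain ⟨δ, hδpos, hδ⟩ := Metric.eventually_nhds_iff.mp (hcq.eventually_lt_const hb)
    have hy : Ψ v₀ u (y₀ + δ/2) < b := hδ (by rw [Real.dist_eq]; rw [abs_of_nonneg (by linarith)]; linarith)
    have hev : ∀ᶠ v in 𝓝 v₀, Ψ v u (y₀ + δ/2) < b :=
      ((traj_cont hflow u (y₀ + δ/2)).continuousAt (x := v₀)).eventually_lt_const hy
    have hev2 : ∀ᶠ y in 𝓝 y₀, y < y₀ + δ/2 :=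
      eventually_lt_nhds (by linarith)
    filter_upwards [prod_mem_nhds hev hev2] with p hp
    calc Ψ p.1 u p.2 ≤ Ψ p.1 u (y₀ + δ/2) := (flow_mono hflow hid hcocycle p.1 u).monotone hp.2.le
      _ < b := hp.1

/-- joint continuity in (time, initial time) -/
lemma flow_cont_vu (q : ℝ) : Continuous (fun p : ℝ × ℝ => Ψ p.1 p.2 q) := by
  have h1 : ∀ v u, Ψ v u q = Ψ v 0 (Ψ 0 u q) := by
    intro v u; rw [hcocycle]
  have : (fun p : ℝ × ℝ => Ψ p.1 p.2 q) = fun p : ℝ × ℝ => Ψ p.1 0 (Ψ 0 p.2 q) := by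
    funext p; rw [h1]
  rw [this]
  exact (flow_cont_vq hflow hid hcocycle 0).comp
    (continuous_fst.prodMk ((flow_cont_u hflow hid hcocycle 0 q).comp continuous_snd))

end Aux2

section Aux3
variable {fbar : ℝ → ℝ → ℝ}

/-- partial derivative in the second variable as a derivative -/
lemma fbar_hasDerivAt (hfbar : ContDiff ℝ 1 (Function.uncurry fbar)) (s y : ℝ) :
    HasDerivAt (fbar s) (fderiv ℝ (Function.uncurry fbar) (s, y) (0, 1)) y := by
  have hG : HasFDerivAt (Function.uncurry fbar) (fderiv ℝ (Function.uncurry fbar) (s, y)) (s, y) :=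
    (hfbar.differentiable one_ne_zero).differentiableAt.hasFDerivAt
  have hι : HasDerivAt (fun y : ℝ => ((s : ℝ), y)) ((0 : ℝ), (1 : ℝ)) y :=
    (hasDerivAt_const y s).prodMk (hasDerivAt_id y)
  exact hG.comp_hasDerivAt y hι

lemma fbar_deriv_eq (hfbar : ContDiff ℝ 1 (Function.uncurry fbar)) (s y : ℝ) :
    deriv (fbar s) y = fderiv ℝ (Function.uncurry fbar) (s, y) (0, 1) :=
  (fbar_hasDerivAt hfbar s y).deriv

/-- joint continuity of the partial derivative -/
lemma fbar_deriv_cont (hfbar : ContDiff ℝ 1 (Function.uncurry fbar)) :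
    Continuous (fun p : ℝ × ℝ => deriv (fbar p.1) p.2) := by
  have h1 : Continuous (fun p : ℝ × ℝ => fderiv ℝ (Function.uncurry fbar) p) :=
    hfbar.continuous_fderiv one_ne_zero
  have h2 : Continuous (fun p : ℝ × ℝ => fderiv ℝ (Function.uncurry fbar) p ((0 : ℝ), (1 : ℝ))) :=
    (ContinuousLinearMap.apply ℝ ℝ ((0 : ℝ), (1 : ℝ))).continuous.comp h1
  have : (fun p : ℝ × ℝ => deriv (fbar p.1) p.2)
      = fun p : ℝ × ℝ => fderiv ℝ (Function.uncurry fbar) p ((0 : ℝ), (1 : ℝ)) := by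
    funext p; exact fbar_deriv_eq hfbar p.1 p.2
  rw [this]; exact h2

end Aux3

section Aux4
variable {fbar : ℝ → ℝ → ℝ} {Ψ : ℝ → ℝ → ℝ → ℝ}
variable (hfbar : ContDiff ℝ 1 (Function.uncurry fbar))
variable (hflow : ∀ u₀ q₀ u₁, HasDerivAt (fun v => Ψ v u₀ q₀) (-(fbar u₁ (Ψ u₁ u₀ q₀))) u₁)
variable (hid : ∀ u q, Ψ u u q = q)
variable (hcocycle : ∀ u₂ u₁ u₀ q, Ψ u₂ u₁ (Ψ u₁ u₀ q) = Ψ u₂ u₀ q)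

include hfbar hflow hid hcocycle

/-- exact formula for the difference of two trajectories -/
lemma diff_formula (u q q' : ℝ) (hqq' : q < q') :
    Ψ 0 u q' - Ψ 0 u q
      = (q' - q) * Real.exp (∫ s in (0:ℝ)..u, slope (fbar s) (Ψ s u q) (Ψ s u q')) := by
  set D : ℝ → ℝ := fun s => Ψ s u q' - Ψ s u q with hD
  have hDpos : ∀ s, 0 < D s := fun s => sub_pos.mpr (flow_mono hflow hid hcocycle s u hqq')
  set c : ℝ → ℝ := fun s => slope (fbar s) (Ψ s u q) (Ψ s u q') with hc
  have hccont : Continuous c := by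
    have h1 : Continuous fun s => fbar s (Ψ s u q') :=
      hfbar.continuous.comp (continuous_id.prodMk (traj_cont hflow u q'))
    have h2 : Continuous fun s => fbar s (Ψ s u q) :=
      hfbar.continuous.comp (continuous_id.prodMk (traj_cont hflow u q))
    have h3 : Continuous D := (traj_cont hflow u q').sub (traj_cont hflow u q)
    have : c = fun s => (fbar s (Ψ s u q') - fbar s (Ψ s u q)) / D s := by
      funext s; simp only [hc, hD, slope_def_field]
    rw [this]
    exact (h1.sub h2).div h3 fun s => ne_of_gt (hDpos s)
  set E : ℝ → ℝ := fun s => Real.log (D s) with hE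
  have hEderiv : ∀ s, HasDerivAt E (-(c s)) s := by
    intro s
    have hD' : HasDerivAt D (-(fbar s (Ψ s u q')) - -(fbar s (Ψ s u q))) s :=
      (hflow u q' s).sub (hflow u q s)
    have h4 := hD'.log (ne_of_gt (hDpos s))
    have heq : -(c s) = (-(fbar s (Ψ s u q')) - -(fbar s (Ψ s u q))) / D s := by
      simp only [hc, hD, slope_def_field]; ring
    rw [heq]
    exact h4
  have hInt : IntervalIntegrable (fun s => -(c s)) MeasureTheory.volume 0 u :=
    (hccont.neg).intervalIntegrable 0 u
  have hFTC : ∫ s in (0:ℝ)..u, -(c s) = E u - E 0 :=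
    intervalIntegral.integral_eq_sub_of_hasDerivAt (fun s _ => hEderiv s) hInt
  rw [intervalIntegral.integral_neg] at hFTC
  have hE0 : E 0 = E u + ∫ s in (0:ℝ)..u, c s := by linarith
  have hDu : D u = q' - q := by simp [hD, hid]
  have : D 0 = Real.exp (E 0) := (Real.exp_log (hDpos 0)).symm
  rw [hE0, Real.exp_add, hE, Real.exp_log (hDpos u), hDu] at this
  exact this

/-- slope formula, valid for all `q' ≠ q` -/
lemma slope_formula (u q q' : ℝ) (hne : q' ≠ q) :
    slope (Ψ 0 u) q q'
      = Real.exp (∫ s in (0:ℝ)..u, slope (fbar s) (Ψ s u q) (Ψ s u q')) := by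
  rcases lt_or_gt_of_ne hne with h | h
  · have := diff_formula hfbar hflow hid hcocycle u q' q h
    have hs : ∀ s, slope (fbar s) (Ψ s u q') (Ψ s u q) = slope (fbar s) (Ψ s u q) (Ψ s u q') :=
      fun s => slope_comm _ _ _
    simp only [hs] at this
    rw [slope_def_field, div_eq_iff (sub_ne_zero.mpr hne)]
    linarith [this]
  · have := diff_formula hfbar hflow hid hcocycle u q q' h
    rw [slope_def_field, div_eq_iff (sub_ne_zero.mpr hne)]
    linarith [this]

end Aux4

section Aux5
variable {fbar : ℝ → ℝ → ℝ} {Ψ : ℝ → ℝ → ℝ → ℝ}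
variable (hfbar : ContDiff ℝ 1 (Function.uncurry fbar))
variable (hflow : ∀ u₀ q₀ u₁, HasDerivAt (fun v => Ψ v u₀ q₀) (-(fbar u₁ (Ψ u₁ u₀ q₀))) u₁)
variable (hid : ∀ u q, Ψ u u q = q)
variable (hcocycle : ∀ u₂ u₁ u₀ q, Ψ u₂ u₁ (Ψ u₁ u₀ q) = Ψ u₂ u₀ q)

include hfbar hflow hid hcocycle

/-- the variational equation: derivative of the flow map in the initial value -/
lemma variational (u q : ℝ) :
    HasDerivAt (fun x => Ψ 0 u x)
      (Real.exp (∫ s in (0:ℝ)..u, deriv (fbar s) (Ψ s u q))) q := by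
  rw [hasDerivAt_iff_tendsto_slope]
  -- the parametrized integrand
  set c : ℝ → ℝ → ℝ := fun q' s => slope (fbar s) (Ψ s u q) (Ψ s u q') with hcdef
  -- a uniform bound
  obtain ⟨R, hR⟩ : ∃ R, ∀ s ∈ Set.uIcc (0:ℝ) u, ∀ x ∈ Set.Icc (q-1) (q+1),
      |Ψ s u x| ≤ R := by
    obtain ⟨R₁, hR₁⟩ := (isCompact_uIcc (a := (0:ℝ)) (b := u)).exists_bound_of_continuousOn
      ((traj_cont hflow u (q-1)).continuousOn (s := Set.uIcc 0 u))
    obtain ⟨R₂, hR₂⟩ := (isCompact_uIcc (a := (0:ℝ)) (b := u)).exists_bound_of_continuousOn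
      ((traj_cont hflow u (q+1)).continuousOn (s := Set.uIcc 0 u))
    refine ⟨max R₁ R₂, fun s hs x hx => ?_⟩
    have h1 : Ψ s u (q-1) ≤ Ψ s u x := (flow_mono hflow hid hcocycle s u).monotone hx.1
    have h2 : Ψ s u x ≤ Ψ s u (q+1) := (flow_mono hflow hid hcocycle s u).monotone hx.2
    have := hR₁ s hs; have := hR₂ s hs
    rw [Real.norm_eq_abs] at *
    rw [abs_le]
    constructor
    · nlinarith [abs_le.mp (le_trans (hR₁ s hs) (le_max_left R₁ R₂)),
        abs_le.mp (le_trans (hR₂ s hs) (le_max_right R₁ R₂))]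
    · nlinarith [abs_le.mp (le_trans (hR₁ s hs) (le_max_left R₁ R₂)),
        abs_le.mp (le_trans (hR₂ s hs) (le_max_right R₁ R₂))]
  obtain ⟨C₀, hC₀⟩ : ∃ C₀, ∀ p ∈ (Set.uIcc (0:ℝ) u) ×ˢ Set.Icc (-R) R,
      ‖deriv (fbar p.1) p.2‖ ≤ C₀ :=
    ((isCompact_uIcc.prod isCompact_Icc).exists_bound_of_continuousOn
      ((fbar_deriv_cont hfbar).continuousOn))
  set C := max C₀ 0 with hC
  -- the slope bound
  have hslope_bound : ∀ s ∈ Set.uIcc (0:ℝ) u, ∀ a ∈ Set.Icc (-R) R, ∀ b ∈ Set.Icc (-R) R,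
      |slope (fbar s) a b| ≤ C := by
    intro s hs a ha b hb
    rcases eq_or_ne b a with rfl | hba
    · simp [slope_same, hC, le_max_iff]
    · have hlip : ‖fbar s b - fbar s a‖ ≤ C * ‖b - a‖ := by
        apply (convex_Icc (-R) R).norm_image_sub_le_of_norm_hasDerivWithin_le
          (f' := deriv (fbar s)) (fun x _ => ((fbar_hasDerivAt hfbar s x).differentiableAt.hasDerivAt).hasDerivWithinAt)
          (fun x hx => le_trans (hC₀ (s, x) ⟨hs, hx⟩) (le_max_left _ _)) ha hb
      rw [slope_def_field, abs_div]
      rw [div_le_iff₀ (by rwa [abs_pos, sub_ne_zero])]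
      calc |fbar s b - fbar s a| ≤ C * |b - a| := by
            simpa [Real.norm_eq_abs] using hlip
        _ = C * |b - a| := rfl
  -- convergence of the integrals
  have hI : Tendsto (fun q' => ∫ s in (0:ℝ)..u, c q' s) (𝓝[≠] q)
      (𝓝 (∫ s in (0:ℝ)..u, deriv (fbar s) (Ψ s u q))) := by
    apply intervalIntegral.tendsto_integral_filter_of_dominated_convergence (fun _ => C)
    · -- measurability
      filter_upwards [self_mem_nhdsWithin] with q' (hq' : q' ≠ q)
      apply Continuous.aestronglyMeasurable
      have hden : ∀ s, Ψ s u q' - Ψ s u q ≠ 0 := by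
        intro s h
        exact hq' (flow_inj hid hcocycle s u (by linarith [sub_eq_zero.mp h]))
      have : c q' = fun s => (fbar s (Ψ s u q') - fbar s (Ψ s u q)) / (Ψ s u q' - Ψ s u q) := by
        funext s; simp only [hcdef, slope_def_field]
      rw [this]
      exact ((hfbar.continuous.comp (continuous_id.prodMk (traj_cont hflow u q'))).sub
        (hfbar.continuous.comp (continuous_id.prodMk (traj_cont hflow u q)))).div
        (((traj_cont hflow u q').sub (traj_cont hflow u q))) hden
    · -- bound
      have hball : Set.Ioo (q-1) (q+1) ∈ 𝓝[≠] q :=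
        nhdsWithin_le_nhds (Ioo_mem_nhds (by linarith) (by linarith))
      filter_upwards [hball] with q' hq'
      apply MeasureTheory.ae_of_all
      intro s hs
      have hs' : s ∈ Set.uIcc (0:ℝ) u := Set.uIoc_subset_uIcc hs
      have ha : Ψ s u q ∈ Set.Icc (-R) R := by
        have := hR s hs' q ⟨by linarith, by linarith⟩
        exact abs_le.mp this |> fun h => ⟨h.1, h.2⟩
      have hb : Ψ s u q' ∈ Set.Icc (-R) R := by
        have := hR s hs' q' ⟨hq'.1.le, hq'.2.le⟩
        exact abs_le.mp this |> fun h => ⟨h.1, h.2⟩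
      simpa [Real.norm_eq_abs] using hslope_bound s hs' _ ha _ hb
    · exact intervalIntegrable_const
    · apply MeasureTheory.ae_of_all
      intro s hs
      have hd : HasDerivAt (fbar s) (deriv (fbar s) (Ψ s u q)) (Ψ s u q) :=
        (fbar_hasDerivAt hfbar s (Ψ s u q)).differentiableAt.hasDerivAt
      have hmap : Tendsto (fun q' => Ψ s u q') (𝓝[≠] q) (𝓝[≠] (Ψ s u q)) := by
        apply tendsto_nhdsWithin_of_tendsto_nhds_of_eventually_within
        · exact ((flow_cont_q hflow hid hcocycle s u).continuousAt).mono_left nhdsWithin_le_nhds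
        · filter_upwards [self_mem_nhdsWithin] with q' (hq' : q' ≠ q)
          exact fun h => hq' (flow_inj hid hcocycle s u h)
      exact (hasDerivAt_iff_tendsto_slope.mp hd).comp hmap
  -- conclude
  have hexp : Tendsto (fun q' => Real.exp (∫ s in (0:ℝ)..u, c q' s)) (𝓝[≠] q)
      (𝓝 (Real.exp (∫ s in (0:ℝ)..u, deriv (fbar s) (Ψ s u q)))) :=
    (Real.continuous_exp.tendsto _).comp hI
  apply hexp.congr'
  filter_upwards [self_mem_nhdsWithin] with q' (hq' : q' ≠ q)
  exact (slope_formula hfbar hflow hid hcocycle u q q' hq').symm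

end Aux5

section Aux6

/-- FTC-1 for continuous integrands, as a convenience lemma -/
lemma ftc_right {f : ℝ → ℝ} (hf : Continuous f) (a b : ℝ) :
    HasDerivAt (fun u => ∫ x in a..u, f x) (f b) b :=
  intervalIntegral.integral_hasDerivAt_right (hf.intervalIntegrable a b)
    (hf.stronglyMeasurableAtFilter _ _) hf.continuousAt

/-- continuity of a parametric interval integral over a fixed interval -/
lemma cont_param_fixed (k : ℝ → ℝ → ℝ) (hk : Continuous (Function.uncurry k)) (a b : ℝ) :
    Continuous fun x => ∫ s in a..b, k s x := by
  rw [continuous_iff_continuousAt]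
  intro x₀
  obtain ⟨M, hM⟩ : ∃ M, ∀ p ∈ (Set.uIcc a b) ×ˢ Set.Icc (x₀-1) (x₀+1),
      ‖Function.uncurry k p‖ ≤ M :=
    (isCompact_uIcc.prod isCompact_Icc).exists_bound_of_continuousOn hk.continuousOn
  apply intervalIntegral.tendsto_integral_filter_of_dominated_convergence (fun _ => M)
  · filter_upwards with x
    exact (hk.comp (continuous_id.prodMk continuous_const)).aestronglyMeasurable
  · filter_upwards [Metric.ball_mem_nhds x₀ one_pos] with x hx
    apply MeasureTheory.ae_of_all
    intro s hs
    have hx' : x ∈ Set.Icc (x₀-1) (x₀+1) := by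
      rw [Metric.mem_ball, Real.dist_eq, abs_lt] at hx
      constructor <;> linarith
    exact hM (s, x) ⟨Set.uIoc_subset_uIcc hs, hx'⟩
  · exact intervalIntegrable_const
  · apply MeasureTheory.ae_of_all
    intro s _
    exact ((hk.comp (continuous_const.prodMk continuous_id)).tendsto x₀)

/-- continuity of a parametric interval integral with moving endpoint -/
lemma cont_param (k : ℝ → ℝ → ℝ) (hk : Continuous (Function.uncurry k)) :
    Continuous fun u => ∫ s in (0:ℝ)..u, k s u := by
  rw [continuous_iff_continuousAt]
  intro u₀
  have hsplit : ∀ u, (∫ s in (0:ℝ)..u, k s u)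
      = (∫ s in (0:ℝ)..u₀, k s u) + ∫ s in u₀..u, k s u := by
    intro u
    rw [intervalIntegral.integral_add_adjacent_intervals]
    · exact (hk.comp (continuous_id.prodMk continuous_const)).intervalIntegrable _ _
    · exact (hk.comp (continuous_id.prodMk continuous_const)).intervalIntegrable _ _
  have h1 : Tendsto (fun u => ∫ s in (0:ℝ)..u₀, k s u) (𝓝 u₀)
      (𝓝 (∫ s in (0:ℝ)..u₀, k s u₀)) := (cont_param_fixed k hk 0 u₀).tendsto u₀
  have h2 : Tendsto (fun u => ∫ s in u₀..u, k s u) (𝓝 u₀) (𝓝 0) := by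
    obtain ⟨M, hM⟩ : ∃ M, ∀ p ∈ (Set.Icc (u₀-1) (u₀+1)) ×ˢ Set.Icc (u₀-1) (u₀+1),
        ‖Function.uncurry k p‖ ≤ M :=
      (isCompact_Icc.prod isCompact_Icc).exists_bound_of_continuousOn hk.continuousOn
    rw [tendsto_zero_iff_norm_tendsto_zero]
    apply squeeze_zero' (g := fun u => M * |u - u₀|)
      (Filter.Eventually.of_forall fun u => norm_nonneg _)
    · filter_upwards [Metric.ball_mem_nhds u₀ one_pos] with u hu
      rw [Metric.mem_ball, Real.dist_eq] at hu
      have hu' : u ∈ Set.Icc (u₀-1) (u₀+1) := by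
        rw [abs_lt] at hu; constructor <;> linarith
      have : ∀ s ∈ Set.uIoc u₀ u, ‖k s u‖ ≤ M := by
        intro s hs
        have hs' : s ∈ Set.Icc (u₀-1) (u₀+1) := by
          have := Set.uIoc_subset_uIcc hs
          rcases Set.mem_uIcc.mp this with ⟨h1', h2'⟩ | ⟨h1', h2'⟩ <;>
            (constructor <;> [linarith [hu'.1]; linarith [hu'.2]])
        exact hM (s, u) ⟨hs', hu'⟩
      exact intervalIntegral.norm_integral_le_of_norm_le_const this
    · have habs : Tendsto (fun u => |u - u₀|) (𝓝 u₀) (𝓝 0) := by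
        have hc : Continuous (fun u : ℝ => |u - u₀|) :=
          continuous_abs.comp (continuous_id.sub continuous_const)
        have := hc.tendsto u₀
        simpa using this
      simpa using (tendsto_const_nhds (x := M)).mul habs
  have h3 := h1.add h2
  rw [add_zero] at h3
  apply Tendsto.congr (fun u => (hsplit u).symm)
  exact h3

end Aux6

section Aux7
variable {fbar : ℝ → ℝ → ℝ} {Ψ : ℝ → ℝ → ℝ → ℝ}
variable (hfbar : ContDiff ℝ 1 (Function.uncurry fbar))
variable (hflow : ∀ u₀ q₀ u₁, HasDerivAt (fun v => Ψ v u₀ q₀) (-(fbar u₁ (Ψ u₁ u₀ q₀))) u₁)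
variable (hid : ∀ u q, Ψ u u q = q)
variable (hcocycle : ∀ u₂ u₁ u₀ q, Ψ u₂ u₁ (Ψ u₁ u₀ q) = Ψ u₂ u₀ q)

include hfbar hflow hid hcocycle

/-- derivative of the flow in the initial time, at the diagonal, starting value 0 -/
lemma eta_hasDerivAt (u₀ : ℝ) :
    HasDerivAt (fun w => Ψ u₀ w 0) (fbar u₀ 0) u₀ := by
  -- integral representation
  have hrep : ∀ w, Ψ u₀ w 0 = ∫ v in u₀..w, fbar v (Ψ v w 0) := by
    intro w
    have hcont : Continuous fun v => fbar v (Ψ v w 0) :=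
      hfbar.continuous.comp (continuous_id.prodMk (traj_cont hflow w 0))
    have hFTC : ∫ v in w..u₀, -(fbar v (Ψ v w 0))
        = Ψ u₀ w 0 - Ψ w w 0 :=
      intervalIntegral.integral_eq_sub_of_hasDerivAt (fun v _ => hflow w 0 v)
        (hcont.neg.intervalIntegrable _ _)
    rw [hid, sub_zero] at hFTC
    rw [← hFTC, intervalIntegral.integral_neg, ← intervalIntegral.integral_symm]
  -- joint continuity of the integrand
  have hg : Continuous fun p : ℝ × ℝ => fbar p.1 (Ψ p.1 p.2 0) :=
    hfbar.continuous.comp (continuous_fst.prodMk (flow_cont_vu hflow hid hcocycle 0))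
  rw [hasDerivAt_iff_tendsto_slope]
  rw [Metric.tendsto_nhdsWithin_nhds]
  intro ε hε
  -- continuity of g at (u₀,u₀)
  have hg0 : fbar u₀ (Ψ u₀ u₀ 0) = fbar u₀ 0 := by rw [hid]
  obtain ⟨δ, hδpos, hδ⟩ := Metric.continuousAt_iff.mp (hg.continuousAt (x := (u₀, u₀))) (ε/2)
    (by linarith)
  refine ⟨δ/2, by linarith, ?_⟩
  intro w hw hdist
  have hwne : w ≠ u₀ := hw
  rw [Real.dist_eq] at hdist
  -- the slope
  have hη0 : Ψ u₀ u₀ 0 = 0 := hid u₀ 0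
  have hcontw : Continuous fun v => fbar v (Ψ v w 0) :=
    hfbar.continuous.comp (continuous_id.prodMk (traj_cont hflow w 0))
  have hbound : ∀ v ∈ Set.uIoc u₀ w, ‖fbar v (Ψ v w 0) - fbar u₀ 0‖ ≤ ε/2 := by
    intro v hv
    have hv' : |v - u₀| ≤ |w - u₀| := by
      rcases Set.mem_uIoc.mp hv with ⟨h1, h2⟩ | ⟨h1, h2⟩
      · rw [abs_of_pos (by linarith), abs_of_pos (by linarith)]; linarith
      · rw [abs_of_nonpos (by linarith), abs_of_neg (by linarith)]; linarith
    have hdistp : dist (v, w) (u₀, u₀) < δ := by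
      rw [Prod.dist_eq]
      apply max_lt
      · rw [Real.dist_eq]; linarith
      · rw [Real.dist_eq]; linarith
    have := hδ hdistp
    rw [hg0] at this
    rw [Real.dist_eq] at this
    exact le_of_lt (by simpa [Real.norm_eq_abs] using this)
  have hint : ‖∫ v in u₀..w, (fbar v (Ψ v w 0) - fbar u₀ 0)‖ ≤ (ε/2) * |w - u₀| :=
    intervalIntegral.norm_integral_le_of_norm_le_const hbound
  have hsub : ∫ v in u₀..w, (fbar v (Ψ v w 0) - fbar u₀ 0)
      = (∫ v in u₀..w, fbar v (Ψ v w 0)) - (w - u₀) * fbar u₀ 0 := by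
    rw [intervalIntegral.integral_sub (hcontw.intervalIntegrable _ _)
      (intervalIntegrable_const), intervalIntegral.integral_const, smul_eq_mul]
  rw [Real.dist_eq]
  have hslope : slope (fun w => Ψ u₀ w 0) u₀ w = (Ψ u₀ w 0) / (w - u₀) := by
    rw [slope_def_field, hη0, sub_zero]
  rw [hslope, hrep w]
  have hwsub : w - u₀ ≠ 0 := sub_ne_zero.mpr hwne
  have : (∫ v in u₀..w, fbar v (Ψ v w 0)) / (w - u₀) - fbar u₀ 0
      = (∫ v in u₀..w, (fbar v (Ψ v w 0) - fbar u₀ 0)) / (w - u₀) := by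
    rw [hsub]; field_simp
  rw [this, abs_div]
  rw [div_lt_iff₀ (abs_pos.mpr hwsub)]
  calc ‖∫ v in u₀..w, (fbar v (Ψ v w 0) - fbar u₀ 0)‖ ≤ (ε/2) * |w - u₀| := hint
    _ < ε * |w - u₀| := by
        have : (0:ℝ) < |w - u₀| := abs_pos.mpr hwsub
        nlinarith
  
/-- derivative of `u ↦ Ψ 0 u 0` -/
lemma beta_hasDerivAt (u₀ : ℝ) :
    HasDerivAt (fun u => Ψ 0 u 0)
      (Real.exp (∫ s in (0:ℝ)..u₀, deriv (fbar s) (Ψ s u₀ 0)) * fbar u₀ 0) u₀ := by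
  have h1 : (fun u => Ψ 0 u 0) = fun u => Ψ 0 u₀ (Ψ u₀ u 0) := by
    funext u; rw [hcocycle]
  rw [h1]
  have hη : HasDerivAt (fun w => Ψ u₀ w 0) (fbar u₀ 0) u₀ :=
    eta_hasDerivAt hfbar hflow hid hcocycle u₀
  have hA : HasDerivAt (fun x => Ψ 0 u₀ x)
      (Real.exp (∫ s in (0:ℝ)..u₀, deriv (fbar s) (Ψ s u₀ 0))) (Ψ u₀ u₀ 0) := by
    rw [hid]
    exact variational hfbar hflow hid hcocycle u₀ 0
  exact hA.comp u₀ hη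

end Aux7


/-- Corollary 1.2: the Lagrangian
`L(u,p) = ∫₀ᵖ∫₀^{p₁} exp(F_q(u,p₂²/2)) dp₂ dp₁ − F(u)` can be written as
`L(u,p) = p·φ(u,p) − Ψ^{0,u}(p²/2)` with `φ(u,p) = ∫₀ᵖ Ψ^{0,u}_q(p₂²/2) dp₂`. -/
theorem stmt9
    (fbar : ℝ → ℝ → ℝ) (hfbar : ContDiff ℝ 1 (Function.uncurry fbar))
    (Ψ : ℝ → ℝ → ℝ → ℝ)
    (hflow : ∀ u₀ q₀ u₁, HasDerivAt (fun v => Ψ v u₀ q₀) (-(fbar u₁ (Ψ u₁ u₀ q₀))) u₁)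
    (hid : ∀ u q, Ψ u u q = q)
    (hcocycle : ∀ u₂ u₁ u₀ q, Ψ u₂ u₁ (Ψ u₁ u₀ q) = Ψ u₂ u₀ q)
    (Fq : ℝ → ℝ → ℝ)
    (hFq : ∀ u q, Fq u q = ∫ u₁ in (0:ℝ)..u, deriv (fbar u₁) (Ψ u₁ u q))
    (F : ℝ → ℝ)
    (hF : ∀ u, F u = ∫ u₁ in (0:ℝ)..u, fbar u₁ 0 * Real.exp (Fq u₁ 0))
    (L : ℝ → ℝ → ℝ)
    (hL : ∀ u p, L u p
      = (∫ p₁ in (0:ℝ)..p, ∫ p₂ in (0:ℝ)..p₁, Real.exp (Fq u (p₂^2 / 2))) - F u)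
    (φ : ℝ → ℝ → ℝ)
    (hφ : ∀ u p, φ u p = ∫ p₂ in (0:ℝ)..p, deriv (Ψ 0 u) (p₂^2 / 2)) :
    ∀ u p, L u p = p * φ u p - Ψ 0 u (p^2 / 2) := by
  -- the variational derivative
  have hA : ∀ u x, HasDerivAt (fun y => Ψ 0 u y) (Real.exp (Fq u x)) x := by
    intro u x
    rw [hFq]
    exact variational hfbar hflow hid hcocycle u x
  -- continuity of Fq in q
  have hFqcont : ∀ u, Continuous fun x => Fq u x := by
    intro u
    have : (fun x => Fq u x) = fun x => ∫ s in (0:ℝ)..u, deriv (fbar s) (Ψ s u x) := by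
      funext x; exact hFq u x
    rw [this]
    exact cont_param_fixed (fun s x => deriv (fbar s) (Ψ s u x))
      ((fbar_deriv_cont hfbar).comp
        (continuous_fst.prodMk (flow_cont_vq hflow hid hcocycle u))) 0 u
  -- continuity of u ↦ Fq u 0
  have hFqu0cont : Continuous fun u => Fq u 0 := by
    have : (fun u => Fq u 0) = fun u => ∫ s in (0:ℝ)..u, deriv (fbar s) (Ψ s u 0) := by
      funext u; exact hFq u 0
    rw [this]
    exact cont_param (fun s u => deriv (fbar s) (Ψ s u 0))
      ((fbar_deriv_cont hfbar).comp
        (continuous_fst.prodMk (flow_cont_vu hflow hid hcocycle 0)))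
  -- F u = Ψ 0 u 0
  have hFeqβ : ∀ u, F u = Ψ 0 u 0 := by
    have hcont : Continuous fun u₁ => fbar u₁ 0 * Real.exp (Fq u₁ 0) :=
      (hfbar.continuous.comp (continuous_id.prodMk continuous_const)).mul
        (Real.continuous_exp.comp hFqu0cont)
    have hFd : ∀ u, HasDerivAt F (fbar u 0 * Real.exp (Fq u 0)) u := by
      intro u
      have : F = fun u => ∫ u₁ in (0:ℝ)..u, fbar u₁ 0 * Real.exp (Fq u₁ 0) := funext hF
      rw [this]
      exact ftc_right hcont 0 u
    have hβd : ∀ u, HasDerivAt (fun u => Ψ 0 u 0) (fbar u 0 * Real.exp (Fq u 0)) u := by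
      intro u
      have := beta_hasDerivAt hfbar hflow hid hcocycle u
      rw [← hFq u 0] at this
      rw [mul_comm]
      exact this
    have hd : ∀ u, HasDerivAt (fun u => F u - Ψ 0 u 0) 0 u := by
      intro u
      have := (hFd u).sub (hβd u)
      rw [sub_self] at this
      exact this
    have hconst := is_const_of_deriv_eq_zero
      (fun u => (hd u).differentiableAt) (fun u => (hd u).deriv)
    intro u
    have h0 : F 0 - Ψ 0 0 0 = 0 := by
      rw [hF 0, intervalIntegral.integral_same, hid]; ring
    have := hconst u 0
    rw [h0] at this
    linarith [this]
  intro u p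
  set e : ℝ → ℝ := fun x => Real.exp (Fq u x) with he_def
  have he : Continuous e := Real.continuous_exp.comp (hFqcont u)
  have hecomp : Continuous fun x : ℝ => e (x^2/2) :=
    he.comp ((continuous_pow 2).div_const 2)
  have hφ' : ∀ x, φ u x = ∫ p₂ in (0:ℝ)..x, e (p₂^2/2) := by
    intro x
    rw [hφ]
    apply intervalIntegral.integral_congr
    intro y _
    exact (hA u (y^2/2)).deriv
  have hsq : ∀ x : ℝ, HasDerivAt (fun p : ℝ => p^2/2) x x := by
    intro x
    have := (hasDerivAt_pow 2 x).div_const 2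
    simpa using this
  have hφd : ∀ x, HasDerivAt (fun p => φ u p) (e (x^2/2)) x := by
    intro x
    have : (fun p => φ u p) = fun p => ∫ p₂ in (0:ℝ)..p, e (p₂^2/2) := funext hφ'
    rw [this]
    exact ftc_right hecomp 0 x
  have hΨd : ∀ x : ℝ, HasDerivAt (fun p : ℝ => Ψ 0 u (p^2/2)) (e (x^2/2) * x) x :=
    fun x => (hA u (x^2/2)).comp x (hsq x)
  have hRHSd : ∀ x, HasDerivAt (fun p => p * φ u p - Ψ 0 u (p^2/2)) (φ u x) x := by
    intro x
    have h1 : HasDerivAt (fun p => p * φ u p - Ψ 0 u (p^2/2))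
        (1 * φ u x + x * e (x^2/2) - e (x^2/2) * x) x :=
      ((hasDerivAt_id x).mul (hφd x)).sub (hΨd x)
    convert h1 using 1
    ring
  have hP : ∀ x : ℝ, HasDerivAt (fun p₁ => ∫ p₂ in (0:ℝ)..p₁, e (p₂^2/2)) (e (x^2/2)) x :=
    fun x => ftc_right hecomp 0 x
  have hPcont : Continuous fun p₁ => ∫ p₂ in (0:ℝ)..p₁, e (p₂^2/2) := by
    have : Differentiable ℝ fun p₁ => ∫ p₂ in (0:ℝ)..p₁, e (p₂^2/2) :=
      fun x => (hP x).differentiableAt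
    exact this.continuous
  have hLd : ∀ x, HasDerivAt (fun p => L u p) (φ u x) x := by
    intro x
    have hLfun : (fun p => L u p)
        = fun p => (∫ p₁ in (0:ℝ)..p, ∫ p₂ in (0:ℝ)..p₁, e (p₂^2/2)) - F u := by
      funext p; exact hL u p
    rw [hLfun]
    have := (ftc_right hPcont 0 x).sub_const (F u)
    rw [hφ' x]
    exact this
  have hd : ∀ x, HasDerivAt (fun p => L u p - (p * φ u p - Ψ 0 u (p^2/2))) 0 x := by
    intro x
    have := (hLd x).sub (hRHSd x)
    rw [sub_self] at this
    exact this
  have hconst := is_const_of_deriv_eq_zero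
    (fun x => (hd x).differentiableAt) (fun x => (hd x).deriv)
  have h0 : L u 0 - (0 * φ u 0 - Ψ 0 u ((0:ℝ)^2/2)) = 0 := by
    rw [hL u 0, intervalIntegral.integral_same]
    have : ((0:ℝ)^2/2) = 0 := by norm_num
    rw [this, hFeqβ u]
    ring
  have := hconst p 0
  rw [h0] at this
  linarith [this]
end

section
/- Let g, h : ℝ² → ℝ be C¹ and define f(x,u,p) = (u cos x − p sin x + g(u cos x − p sin x, u sin x + p cos x))·cos x + (u sin x + p cos x + h(u cos x − p sin x, u sin x + p cos x))·sin x. If a, b : ℝ → ℝ are C¹ solutions of the planar ODE a' = g(a,b), b' = h(a,b), then u(t,x) = a(t)·cos x + b(t)·sin x is a solution of the PDE u_t = u_xx + f(x, u, u_x). -/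
/-- Embedding of a planar ODE flow: if `a' = g(a,b)`, `b' = h(a,b)`, then
`u(t,x) = a(t)cos x + b(t)sin x` solves `u_t = u_xx + f(x,u,u_x)` where `f` is
defined by the rotation formula. -/
theorem stmt13
    (g h : ℝ → ℝ → ℝ)
    (hg : ContDiff ℝ 1 (Function.uncurry g)) (hh : ContDiff ℝ 1 (Function.uncurry h))
    (f : ℝ → ℝ → ℝ → ℝ)
    (hf : ∀ x u p, f x u p
      = (u * Real.cos x - p * Real.sin x
          + g (u * Real.cos x - p * Real.sin x) (u * Real.sin x + p * Real.cos x))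
          * Real.cos x
        + (u * Real.sin x + p * Real.cos x
          + h (u * Real.cos x - p * Real.sin x) (u * Real.sin x + p * Real.cos x))
          * Real.sin x)
    (a b : ℝ → ℝ)
    (ha : ∀ t, HasDerivAt a (g (a t) (b t)) t)
    (hb : ∀ t, HasDerivAt b (h (a t) (b t)) t) :
    ∀ t x,
      deriv (fun s => a s * Real.cos x + b s * Real.sin x) t
        = deriv (deriv (fun y => a t * Real.cos y + b t * Real.sin y)) x
          + f x (a t * Real.cos x + b t * Real.sin x)
              (deriv (fun y => a t * Real.cos y + b t * Real.sin y) x) := by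

  intro t x
  have hx : ∀ t : ℝ, deriv (fun y => a t * Real.cos y + b t * Real.sin y)
      = fun y => -(a t * Real.sin y) + b t * Real.cos y := by
    intro t
    funext y
    rw [HasDerivAt.deriv (f := fun y => a t * Real.cos y + b t * Real.sin y) (((Real.hasDerivAt_cos y).const_mul (a t)).add
      ((Real.hasDerivAt_sin y).const_mul (b t)))]
    ring
  have ht : deriv (fun s => a s * Real.cos x + b s * Real.sin x) t
      = g (a t) (b t) * Real.cos x + h (a t) (b t) * Real.sin x := by
    exact (((ha t).mul_const (Real.cos x)).add ((hb t).mul_const (Real.sin x))).deriv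
  have hxx : deriv (deriv (fun y => a t * Real.cos y + b t * Real.sin y)) x
      = -(a t * Real.cos x) + -(b t * Real.sin x) := by
    rw [hx]
    rw [HasDerivAt.deriv (f := fun y => -(a t * Real.sin y) + b t * Real.cos y) ((((Real.hasDerivAt_sin x).const_mul (a t)).neg).add
      ((Real.hasDerivAt_cos x).const_mul (b t)))]
    ring
  rw [ht, hxx, hx, hf]
  have c := Real.sin_sq_add_cos_sq x
  have c2 := Real.cos_sq_add_sin_sq x
  have e1 : (a t * Real.cos x + b t * Real.sin x) * Real.cos x -
      (-(a t * Real.sin x) + b t * Real.cos x) * Real.sin x = a t := by linear_combination (a t) * c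
  have e2 : (a t * Real.cos x + b t * Real.sin x) * Real.sin x +
      (-(a t * Real.sin x) + b t * Real.cos x) * Real.cos x = b t := by linear_combination (b t) * c
  rw [e1, e2]
  ring
end

section
/- Let a : ℝ³ → ℝ be continuous and uniformly positive (a ≥ a₀ > 0), f : ℝ³ → ℝ continuous, and L : ℝ³ → ℝ C² satisfying L_u − L_{xp} − p·L_{up} + (f(x,u,p)/a(x,u,p))·L_{pp} = 0 for all (x,u,p). If u : ℝ × [0,1] → ℝ is a C² solution of the quasilinear equation u_t = a(x,u,u_x)·u_xx + f(x,u,u_x) with u(t,0) = u(t,1) = 0 for all t, then V(t) = ∫₀¹ L(x,u,u_x) dx satisfies V'(t) = −∫₀¹ a(x,u,u_x)⁻¹·L_{pp}(x,u,u_x)·(u_t)² dx. -/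
open Set MeasureTheory intervalIntegral Metric

lemma clm_apply_triple (φ : ℝ×ℝ×ℝ →L[ℝ] ℝ) (b c d : ℝ) :
    φ (b,c,d) = b * φ (1,0,0) + c * φ (0,1,0) + d * φ (0,0,1) := by
  have h : ((b,c,d) : ℝ×ℝ×ℝ)
      = b • ((1:ℝ),(0:ℝ),(0:ℝ)) + c • ((0:ℝ),(1:ℝ),(0:ℝ)) + d • ((0:ℝ),(0:ℝ),(1:ℝ)) := by
    simp [Prod.ext_iff]
  rw [h, map_add, map_add, _root_.map_smul, _root_.map_smul, _root_.map_smul]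
  simp [smul_eq_mul]

lemma hasDerivAt_slice1 (Lc : ℝ×ℝ×ℝ → ℝ) (x y p : ℝ) (h : DifferentiableAt ℝ Lc (x,y,p)) :
    HasDerivAt (fun z => Lc (z, y, p)) (fderiv ℝ Lc (x,y,p) (1,0,0)) x := by
  have hc : HasDerivAt (fun z : ℝ => ((z, y, p) : ℝ×ℝ×ℝ)) ((1,0,0) : ℝ×ℝ×ℝ) x :=
    (hasDerivAt_id x).prodMk ((hasDerivAt_const x y).prodMk (hasDerivAt_const x p))
  exact h.hasFDerivAt.comp_hasDerivAt x hc

lemma hasDerivAt_slice2 (Lc : ℝ×ℝ×ℝ → ℝ) (x y p : ℝ) (h : DifferentiableAt ℝ Lc (x,y,p)) :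
    HasDerivAt (fun w => Lc (x, w, p)) (fderiv ℝ Lc (x,y,p) (0,1,0)) y := by
  have hc : HasDerivAt (fun w : ℝ => ((x, w, p) : ℝ×ℝ×ℝ)) ((0,1,0) : ℝ×ℝ×ℝ) y :=
    (hasDerivAt_const y x).prodMk ((hasDerivAt_id y).prodMk (hasDerivAt_const y p))
  exact h.hasFDerivAt.comp_hasDerivAt y hc

lemma hasDerivAt_slice3 (Lc : ℝ×ℝ×ℝ → ℝ) (x y p : ℝ) (h : DifferentiableAt ℝ Lc (x,y,p)) :
    HasDerivAt (fun w => Lc (x, y, w)) (fderiv ℝ Lc (x,y,p) (0,0,1)) p := by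
  have hc : HasDerivAt (fun w : ℝ => ((x, y, w) : ℝ×ℝ×ℝ)) ((0,0,1) : ℝ×ℝ×ℝ) p :=
    (hasDerivAt_const p x).prodMk ((hasDerivAt_const p y).prodMk (hasDerivAt_id p))
  exact h.hasFDerivAt.comp_hasDerivAt p hc

lemma hasDerivAt_sliceL (Uc : ℝ×ℝ → ℝ) (t x : ℝ) (h : DifferentiableAt ℝ Uc (t,x)) :
    HasDerivAt (fun s => Uc (s, x)) (fderiv ℝ Uc (t,x) (1,0)) t := by
  have hc : HasDerivAt (fun s : ℝ => ((s, x) : ℝ×ℝ)) ((1,0) : ℝ×ℝ) t :=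
    (hasDerivAt_id t).prodMk (hasDerivAt_const t x)
  exact h.hasFDerivAt.comp_hasDerivAt t hc

lemma hasDerivAt_sliceR (Uc : ℝ×ℝ → ℝ) (t x : ℝ) (h : DifferentiableAt ℝ Uc (t,x)) :
    HasDerivAt (fun z => Uc (t, z)) (fderiv ℝ Uc (t,x) (0,1)) x := by
  have hc : HasDerivAt (fun z : ℝ => ((t, z) : ℝ×ℝ)) ((0,1) : ℝ×ℝ) x :=
    (hasDerivAt_const x t).prodMk (hasDerivAt_id x)
  exact h.hasFDerivAt.comp_hasDerivAt x hc



/-- Quasilinear version of Matano's Lyapunov function: if `L` satisfies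
`L_u − L_{xp} − p·L_{up} + (f/a)·L_{pp} = 0`, then along Dirichlet solutions of
`u_t = a(x,u,u_x)·u_xx + f(x,u,u_x)` the functional `V(t) = ∫₀¹ L(x,u,u_x) dx`
satisfies `V'(t) = −∫₀¹ a⁻¹·L_{pp}·u_t² dx`. -/
theorem stmt15
    (a f : ℝ → ℝ → ℝ → ℝ)
    (ha : Continuous fun v : ℝ × ℝ × ℝ => a v.1 v.2.1 v.2.2)
    (a₀ : ℝ) (ha₀ : 0 < a₀) (hapos : ∀ x y p, a₀ ≤ a x y p)
    (hf : Continuous fun v : ℝ × ℝ × ℝ => f v.1 v.2.1 v.2.2)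
    (L : ℝ → ℝ → ℝ → ℝ) (hL : ContDiff ℝ 2 fun v : ℝ × ℝ × ℝ => L v.1 v.2.1 v.2.2)
    (hpde : ∀ x y p,
      deriv (fun w => L x w p) y
        - deriv (fun z => deriv (fun w => L z y w) p) x
        - p * deriv (fun w => deriv (fun w' => L x w w') p) y
        + (f x y p / a x y p) * deriv (fun w => deriv (fun w' => L x y w') w) p = 0)
    (u : ℝ → ℝ → ℝ) (hu : ContDiff ℝ 2 (Function.uncurry u))
    (upde : ∀ t, ∀ x ∈ Set.Icc (0:ℝ) 1,
      deriv (fun s => u s x) t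
        = a x (u t x) (deriv (u t) x) * deriv (deriv (u t)) x
          + f x (u t x) (deriv (u t) x))
    (bc0 : ∀ t, u t 0 = 0) (bc1 : ∀ t, u t 1 = 0) :
    ∀ t, HasDerivAt
      (fun s => ∫ x in (0:ℝ)..1, L x (u s x) (deriv (u s) x))
      (-∫ x in (0:ℝ)..1,
        (a x (u t x) (deriv (u t) x))⁻¹
          * deriv (fun w => deriv (fun w' => L x (u t x) w') w) (deriv (u t) x)
          * (deriv (fun s => u s x) t)^2) t := by
  intro t₀
  set L' : ℝ×ℝ×ℝ → ℝ := fun v => L v.1 v.2.1 v.2.2 with hL'def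
  have hUd : Differentiable ℝ (Function.uncurry u) := hu.differentiable two_ne_zero
  set DU : ℝ×ℝ → ℝ×ℝ →L[ℝ] ℝ := fderiv ℝ (Function.uncurry u) with hDUdef
  have hDU1 : ContDiff ℝ 1 DU := hu.fderiv_right (by norm_num)
  set P : ℝ×ℝ → ℝ := fun q => DU q (0,1) with hPdef
  set T : ℝ×ℝ → ℝ := fun q => DU q (1,0) with hTdef
  have hP1 : ContDiff ℝ 1 P := hDU1.clm_apply contDiff_const
  have hT1 : ContDiff ℝ 1 T := hDU1.clm_apply contDiff_const
  set Pt : ℝ×ℝ → ℝ := fun q => fderiv ℝ P q (1,0) with hPtdef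
  set Q : ℝ×ℝ → ℝ := fun q => fderiv ℝ P q (0,1) with hQdef
  -- basic derivative facts
  have hA : ∀ t x, HasDerivAt (u t) (P (t,x)) x := fun t x =>
    hasDerivAt_sliceR (Function.uncurry u) t x (hUd _)
  have hPA : ∀ t x, deriv (u t) x = P (t,x) := fun t x => (hA t x).deriv
  have hB : ∀ t x, HasDerivAt (fun s => u s x) (T (t,x)) t := fun t x =>
    hasDerivAt_sliceL (Function.uncurry u) t x (hUd _)
  have hTB : ∀ t x, deriv (fun s => u s x) t = T (t,x) := fun t x => (hB t x).deriv
  have hPx : ∀ t x, HasDerivAt (fun z => P (t,z)) (Q (t,x)) x := fun t x =>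
    hasDerivAt_sliceR P t x ((hP1.differentiable one_ne_zero) _)
  have hPt' : ∀ t x, HasDerivAt (fun s => P (s,x)) (Pt (t,x)) t := fun t x =>
    hasDerivAt_sliceL P t x ((hP1.differentiable one_ne_zero) _)
  have hQA : ∀ t x, deriv (deriv (u t)) x = Q (t,x) := by
    intro t x
    have h : deriv (u t) = fun z => P (t,z) := funext fun z => hPA t z
    rw [h]; exact (hPx t x).deriv
  -- symmetry of second derivative
  have hsymm : ∀ q : ℝ×ℝ, fderiv ℝ T q ((0:ℝ),(1:ℝ)) = Pt q := by
    intro q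
    have hDUq : HasFDerivAt DU (fderiv ℝ DU q) q :=
      ((hDU1.differentiable one_ne_zero) q).hasFDerivAt
    have hsym := second_derivative_symmetric (fun y => (hUd y).hasFDerivAt) hDUq
    have hTf : HasFDerivAt T
        ((ContinuousLinearMap.apply ℝ ℝ (((1:ℝ),(0:ℝ)) : ℝ×ℝ)).comp (fderiv ℝ DU q)) q :=
      (ContinuousLinearMap.apply ℝ ℝ (((1:ℝ),(0:ℝ)) : ℝ×ℝ)).hasFDerivAt.comp q hDUq
    have hPf : HasFDerivAt P
        ((ContinuousLinearMap.apply ℝ ℝ (((0:ℝ),(1:ℝ)) : ℝ×ℝ)).comp (fderiv ℝ DU q)) q :=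
      (ContinuousLinearMap.apply ℝ ℝ (((0:ℝ),(1:ℝ)) : ℝ×ℝ)).hasFDerivAt.comp q hDUq
    have h1 : fderiv ℝ T q ((0:ℝ),(1:ℝ)) = fderiv ℝ DU q (0,1) (1,0) := by
      rw [hTf.fderiv]; rfl
    have h2 : Pt q = fderiv ℝ DU q (1,0) (0,1) := by
      show fderiv ℝ P q ((1:ℝ),(0:ℝ)) = _
      rw [hPf.fderiv]; rfl
    rw [h1, h2]; exact hsym _ _
  have hTx : ∀ t x, HasDerivAt (fun z => T (t,z)) (Pt (t,x)) x := by
    intro t x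
    have h := hasDerivAt_sliceR T t x ((hT1.differentiable one_ne_zero) _)
    rwa [hsymm (t,x)] at h
  -- L derivative data
  have hLd : Differentiable ℝ L' := hL.differentiable two_ne_zero
  set DL : ℝ×ℝ×ℝ → ℝ×ℝ×ℝ →L[ℝ] ℝ := fderiv ℝ L' with hDLdef
  have hDL1 : ContDiff ℝ 1 DL := hL.fderiv_right (by norm_num)
  set l2 : ℝ×ℝ×ℝ → ℝ := fun v => DL v (0,1,0) with hl2def
  set l3 : ℝ×ℝ×ℝ → ℝ := fun v => DL v (0,0,1) with hl3def
  have hl3C1 : ContDiff ℝ 1 l3 := hDL1.clm_apply contDiff_const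
  set D2 : ℝ×ℝ×ℝ → ℝ×ℝ×ℝ → ℝ := fun v d => fderiv ℝ l3 v d with hD2def
  have hLu : ∀ x y p, deriv (fun w => L x w p) y = l2 (x,y,p) := fun x y p =>
    (hasDerivAt_slice2 L' x y p (hLd _)).deriv
  have hl3conv : ∀ x y p, deriv (fun w => L x y w) p = l3 (x,y,p) := fun x y p =>
    (hasDerivAt_slice3 L' x y p (hLd _)).deriv
  have hLxp : ∀ x y p, deriv (fun z => deriv (fun w => L z y w) p) x = D2 (x,y,p) (1,0,0) := by
    intro x y p
    have he : (fun z => deriv (fun w => L z y w) p) = fun z => l3 (z,y,p) :=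
      funext fun z => hl3conv z y p
    rw [he]
    exact (hasDerivAt_slice1 l3 x y p ((hl3C1.differentiable one_ne_zero) _)).deriv
  have hLup : ∀ x y p, deriv (fun w => deriv (fun w' => L x w w') p) y = D2 (x,y,p) (0,1,0) := by
    intro x y p
    have he : (fun w => deriv (fun w' => L x w w') p) = fun w => l3 (x,w,p) :=
      funext fun w => hl3conv x w p
    rw [he]
    exact (hasDerivAt_slice2 l3 x y p ((hl3C1.differentiable one_ne_zero) _)).deriv
  have hLpp : ∀ x y p, deriv (fun w => deriv (fun w' => L x y w') w) p = D2 (x,y,p) (0,0,1) := by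
    intro x y p
    have he : (fun w => deriv (fun w' => L x y w') w) = fun w => l3 (x,y,w) :=
      funext fun w => hl3conv x y w
    rw [he]
    exact (hasDerivAt_slice3 l3 x y p ((hl3C1.differentiable one_ne_zero) _)).deriv
  have hpde' : ∀ x y p, l2 (x,y,p) - D2 (x,y,p) (1,0,0) - p * D2 (x,y,p) (0,1,0)
      + f x y p / a x y p * D2 (x,y,p) (0,0,1) = 0 := by
    intro x y p
    have h := hpde x y p
    rwa [hLu, hLxp, hLup, hLpp] at h
  have ha0 : ∀ x y p, a x y p ≠ 0 := fun x y p => ne_of_gt (lt_of_lt_of_le ha₀ (hapos x y p))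
  have hupde' : ∀ t, ∀ x ∈ Icc (0:ℝ) 1,
      T (t,x) = a x (u t x) (P (t,x)) * Q (t,x) + f x (u t x) (P (t,x)) := by
    intro t x hx
    have h := upde t x hx
    rwa [hTB, hPA, hQA] at h
  -- time derivative of the integrand
  set G : ℝ×ℝ → ℝ := fun q =>
    T q * l2 (q.2, Function.uncurry u q, P q) + Pt q * l3 (q.2, Function.uncurry u q, P q)
    with hGdef
  have hFt : ∀ s x : ℝ, HasDerivAt (fun s' => L x (u s' x) (deriv (u s') x)) (G (s,x)) s := by
    intro s x
    have hfun : (fun s' => L x (u s' x) (deriv (u s') x))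
        = fun s' => L' (x, Function.uncurry u (s',x), P (s',x)) := by
      funext s'; rw [hPA]; rfl
    rw [hfun]
    have hcurve : HasDerivAt (fun s' => ((x, Function.uncurry u (s',x), P (s',x)) : ℝ×ℝ×ℝ))
        ((0, T (s,x), Pt (s,x)) : ℝ×ℝ×ℝ) s :=
      (hasDerivAt_const s x).prodMk ((hB s x).prodMk (hPt' s x))
    have h := (hLd _).hasFDerivAt.comp_hasDerivAt s hcurve
    have hval : DL ((x, Function.uncurry u (s,x), P (s,x)) : ℝ×ℝ×ℝ)
        ((0, T (s,x), Pt (s,x)) : ℝ×ℝ×ℝ) = G (s,x) := by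
      rw [clm_apply_triple]
      simp only [hGdef, hl2def, hl3def]
      ring
    rw [← hval]
    exact h
  -- continuity facts
  have cU : Continuous (Function.uncurry u) := hu.continuous
  have cP : Continuous P := hP1.continuous
  have cT : Continuous T := hT1.continuous
  have cPt : Continuous Pt := (hP1.continuous_fderiv one_ne_zero).clm_apply continuous_const
  have cQ : Continuous Q := (hP1.continuous_fderiv one_ne_zero).clm_apply continuous_const
  have cl2 : Continuous l2 := (hDL1.continuous).clm_apply continuous_const
  have cl3 : Continuous l3 := (hDL1.continuous).clm_apply continuous_const
  have cD2 : ∀ d, Continuous (fun v => D2 v d) := fun d =>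
    (hl3C1.continuous_fderiv one_ne_zero).clm_apply continuous_const
  have cPhi : Continuous (fun q : ℝ×ℝ => ((q.2, Function.uncurry u q, P q) : ℝ×ℝ×ℝ)) :=
    continuous_snd.prodMk (cU.prodMk cP)
  have cG : Continuous G := (cT.mul (cl2.comp cPhi)).add (cPt.mul (cl3.comp cPhi))
  have cF : ∀ s, Continuous (fun x => L x (u s x) (deriv (u s) x)) := by
    intro s
    have h : (fun x => L x (u s x) (deriv (u s) x))
        = fun x => L' (x, Function.uncurry u (s,x), P (s,x)) := by
      funext x; rw [hPA]; rfl
    rw [h]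
    exact hL.continuous.comp (continuous_id.prodMk
      ((cU.comp (continuous_const.prodMk continuous_id)).prodMk
        (cP.comp (continuous_const.prodMk continuous_id))))
  -- differentiation under the integral sign
  obtain ⟨M, hM⟩ := (((isCompact_Icc : IsCompact (Icc (t₀-1) (t₀+1))).prod
    (isCompact_Icc : IsCompact (Icc (0:ℝ) 1)))).exists_bound_of_continuousOn cG.continuousOn
  have key := intervalIntegral.hasDerivAt_integral_of_dominated_loc_of_deriv_le
    (F := fun s x => L x (u s x) (deriv (u s) x)) (F' := fun s x => G (s,x))
    (μ := volume) (x₀ := t₀) (s := ball t₀ 1) (a := (0:ℝ)) (b := 1) (bound := fun _ => M)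
    (ball_mem_nhds t₀ zero_lt_one)
    (Filter.Eventually.of_forall fun s => (cF s).aestronglyMeasurable)
    ((cF t₀).intervalIntegrable 0 1)
    ((cG.comp (continuous_const.prodMk continuous_id)).aestronglyMeasurable)
    (ae_of_all _ fun x hx s hs => by
      have hx' : x ∈ Icc (0:ℝ) 1 := by
        rw [Set.uIoc_of_le (zero_le_one)] at hx
        exact ⟨hx.1.le, hx.2⟩
      have hs' : s ∈ Icc (t₀-1) (t₀+1) := by
        rw [Real.ball_eq_Ioo] at hs
        exact ⟨hs.1.le, hs.2.le⟩
      exact hM (s,x) ⟨hs', hx'⟩)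
    (intervalIntegrable_const)
    (ae_of_all _ fun x hx s hs => hFt s x)
  -- integral identity via integration by parts
  set Phi : ℝ → ℝ×ℝ×ℝ := fun x => ((x, u t₀ x, P (t₀,x)) : ℝ×ℝ×ℝ) with hPhidef
  have cPhix : Continuous Phi := continuous_id.prodMk
    ((cU.comp (continuous_const.prodMk continuous_id)).prodMk
      (cP.comp (continuous_const.prodMk continuous_id)))
  have cTx : Continuous (fun x => T (t₀,x)) := cT.comp (continuous_const.prodMk continuous_id)
  have cPtx : Continuous (fun x => Pt (t₀,x)) := cPt.comp (continuous_const.prodMk continuous_id)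
  have cPx : Continuous (fun x => P (t₀,x)) := cP.comp (continuous_const.prodMk continuous_id)
  have cQx : Continuous (fun x => Q (t₀,x)) := cQ.comp (continuous_const.prodMk continuous_id)
  set h' : ℝ → ℝ := fun x => D2 (Phi x) (1,0,0) + P (t₀,x) * D2 (Phi x) (0,1,0)
    + Q (t₀,x) * D2 (Phi x) (0,0,1) with hh'def
  have ch' : Continuous h' := (((cD2 _).comp cPhix).add
      (cPx.mul ((cD2 _).comp cPhix))).add (cQx.mul ((cD2 _).comp cPhix))
  have hhd : ∀ x, HasDerivAt (fun z => l3 (Phi z)) (h' x) x := by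
    intro x
    have hcurve : HasDerivAt Phi ((1, P (t₀,x), Q (t₀,x)) : ℝ×ℝ×ℝ) x :=
      (hasDerivAt_id x).prodMk ((hA t₀ x).prodMk (hPx t₀ x))
    have h := ((hl3C1.differentiable one_ne_zero) _).hasFDerivAt.comp_hasDerivAt x hcurve
    have hval : fderiv ℝ l3 (Phi x) ((1, P (t₀,x), Q (t₀,x)) : ℝ×ℝ×ℝ) = h' x := by
      rw [clm_apply_triple]
      simp only [hh'def, hD2def]
      ring
    rw [← hval]
    exact h
  have hg0 : T (t₀,(0:ℝ)) = 0 := by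
    rw [← hTB t₀ 0]
    have h : (fun s => u s 0) = fun _ : ℝ => (0:ℝ) := funext bc0
    rw [h, deriv_const]
  have hg1 : T (t₀,(1:ℝ)) = 0 := by
    rw [← hTB t₀ 1]
    have h : (fun s => u s 1) = fun _ : ℝ => (0:ℝ) := funext bc1
    rw [h, deriv_const]
  have hibp : ∫ x in (0:ℝ)..1, l3 (Phi x) * Pt (t₀,x)
      = - ∫ x in (0:ℝ)..1, h' x * T (t₀,x) := by
    have h := intervalIntegral.integral_mul_deriv_eq_deriv_mul_of_hasDerivAt
      (u := fun x => l3 (Phi x)) (v := fun x => T (t₀,x)) (u' := h')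
      (v' := fun x => Pt (t₀,x)) (a := (0:ℝ)) (b := 1)
      ((cl3.comp cPhix).continuousOn) (cTx.continuousOn)
      (fun x _ => hhd x) (fun x _ => hTx t₀ x)
      (ch'.intervalIntegrable 0 1) (cPtx.intervalIntegrable 0 1)
    rw [h]
    simp [hg0, hg1]
  have hGsplit : ∀ x : ℝ, G (t₀,x) = T (t₀,x) * l2 (Phi x) + l3 (Phi x) * Pt (t₀,x) := by
    intro x
    simp [hGdef, hPhidef, Function.uncurry]
    ring
  have hint1 : IntervalIntegrable (fun x => T (t₀,x) * l2 (Phi x)) volume 0 1 :=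
    (cTx.mul (cl2.comp cPhix)).intervalIntegrable 0 1
  have hint2 : IntervalIntegrable (fun x => l3 (Phi x) * Pt (t₀,x)) volume 0 1 :=
    ((cl3.comp cPhix).mul cPtx).intervalIntegrable 0 1
  have hint3 : IntervalIntegrable (fun x => h' x * T (t₀,x)) volume 0 1 :=
    (ch'.mul cTx).intervalIntegrable 0 1
  have hintegral : (∫ x in (0:ℝ)..1, G (t₀,x))
      = -∫ x in (0:ℝ)..1,
        (a x (u t₀ x) (deriv (u t₀) x))⁻¹
          * deriv (fun w => deriv (fun w' => L x (u t₀ x) w') w) (deriv (u t₀) x)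
          * (deriv (fun s => u s x) t₀)^2 := by
    have step1 : (∫ x in (0:ℝ)..1, G (t₀,x))
        = (∫ x in (0:ℝ)..1, T (t₀,x) * l2 (Phi x))
          + ∫ x in (0:ℝ)..1, l3 (Phi x) * Pt (t₀,x) := by
      rw [← intervalIntegral.integral_add hint1 hint2]
      exact intervalIntegral.integral_congr fun x _ => hGsplit x
    rw [step1, hibp, ← sub_eq_add_neg, ← intervalIntegral.integral_sub hint1 hint3,
      ← intervalIntegral.integral_neg]
    apply intervalIntegral.integral_congr
    intro x hx
    have hx' : x ∈ Icc (0:ℝ) 1 := by rwa [Set.uIcc_of_le zero_le_one] at hx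
    beta_reduce
    rw [hPA, hTB, hLpp]
    have hup := hupde' t₀ x hx'
    have hpv := hpde' x (u t₀ x) (P (t₀,x))
    have hane := ha0 x (u t₀ x) (P (t₀,x))
    simp only [hh'def, hPhidef]
    have hL2 : l2 (x, u t₀ x, P (t₀,x))
        = D2 (x, u t₀ x, P (t₀,x)) (1,0,0) + P (t₀,x) * D2 (x, u t₀ x, P (t₀,x)) (0,1,0)
          - f x (u t₀ x) (P (t₀,x)) / a x (u t₀ x) (P (t₀,x)) * D2 (x, u t₀ x, P (t₀,x)) (0,0,1) := by
      linarith
    rw [hL2, hup]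
    field_simp
    ring
  have h2 := key.2
  rwa [hintegral] at h2
end

section
/- Let f̄ : ℝ² → ℝ be C¹ with globally defined flow Ψ of dq/du = −f̄(u,q), and let L(u,p) = p·φ(u,p) − Ψ^{0,u}(p²/2) with φ(u,p) = ∫₀ᵖ Ψ^{0,u}_q(p₂²/2) dp₂. Then L is even in p up to the definition (L(u,−p) = L(u,p)), and L_{pp}(u,p) = Ψ^{0,u}_q(p²/2) > 0 for all (u,p); in particular p ↦ L(u,p) is strictly convex for each u. -/
open Set Real MeasureTheory intervalIntegral Filter Topology

lemma gb_eps (K ε x : ℝ) : gronwallBound 0 K ε x = ε * gronwallBound 0 K 1 x := by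
  rcases eq_or_ne K 0 with h | h
  · subst h; simp [gronwallBound_K0]
  · simp [gronwallBound_of_K_ne_0 h]; ring

lemma gb_nonneg {K x : ℝ} (hK : 0 < K) (hx : 0 ≤ x) : 0 ≤ gronwallBound 0 K 1 x := by
  rw [gronwallBound_of_K_ne_0 hK.ne']
  have : (1:ℝ) ≤ Real.exp (K * x) := by
    rw [← Real.exp_zero]; exact Real.exp_le_exp.2 (by positivity)
  have h1 : (0:ℝ) ≤ Real.exp (K * x) - 1 := by linarith
  positivity


lemma seg_bound' {g g' : ℝ → ℝ} {x y C : ℝ}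
    (hg : ∀ z ∈ Icc (min x y) (max x y), HasDerivAt g (g' z) z)
    (hb : ∀ z ∈ Icc (min x y) (max x y), |g' z| ≤ C) : |g x - g y| ≤ C * |x - y| := by
  have main : ∀ lo hi : ℝ, lo ≤ hi → (∀ z ∈ Icc lo hi, HasDerivAt g (g' z) z) →
      (∀ z ∈ Icc lo hi, |g' z| ≤ C) → |g hi - g lo| ≤ C * (hi - lo) := by
    intro lo hi hle hg hb
    have := norm_image_sub_le_of_norm_deriv_le_segment' (f := g) (f' := g') (C := C)
      (fun z hz => (hg z hz).hasDerivWithinAt)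
      (fun z hz => hb z (Ico_subset_Icc_self hz)) hi (right_mem_Icc.2 hle)
    simpa using this
  rcases le_total y x with h | h
  · have := main y x h (by simpa [min_eq_right h, max_eq_left h] using hg)
      (by simpa [min_eq_right h, max_eq_left h] using hb)
    rwa [abs_of_nonneg (sub_nonneg.2 h)]
  · have := main x y h (by simpa [min_eq_left h, max_eq_right h] using hg)
      (by simpa [min_eq_left h, max_eq_right h] using hb)
    rw [abs_sub_comm, abs_sub_comm x y, abs_of_nonneg (sub_nonneg.2 h)]
    exact this


lemma mem_minmax_dist {x y z : ℝ} (hz : z ∈ Icc (min x y) (max x y)) : |z - y| ≤ |x - y| := by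
  rcases le_total x y with h | h
  · rw [min_eq_left h, max_eq_right h] at hz
    rw [abs_sub_comm, abs_of_nonneg (by linarith [hz.2]), abs_sub_comm,
      abs_of_nonneg (by linarith)]
    linarith [hz.1]
  · rw [min_eq_right h, max_eq_left h] at hz
    rw [abs_of_nonneg (by linarith [hz.1]), abs_of_nonneg (by linarith)]
    linarith [hz.2]

/-- Forward-time main lemma: differentiability of the flow in the initial value,
with explicit positive derivative, plus continuity of the exponent integral. -/
lemma fwdMain (fbar fq : ℝ → ℝ → ℝ)
    (hfqC : Continuous (Function.uncurry fq))
    (hfq : ∀ s x, HasDerivAt (fun y => fbar s y) (fq s x) x)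
    (Ψ : ℝ → ℝ → ℝ) (t₀ t₁ : ℝ) (ht : t₀ ≤ t₁)
    (hflow : ∀ q v, HasDerivAt (fun w => Ψ w q) (-(fbar v (Ψ v q))) v)
    (hid : ∀ q, Ψ t₀ q = q) (q₀ : ℝ) :
    HasDerivAt (fun q => Ψ t₁ q) (Real.exp (-∫ s in t₀..t₁, fq s (Ψ s q₀))) q₀ ∧
    ContinuousAt (fun q => ∫ s in t₀..t₁, fq s (Ψ s q)) q₀ := by
  -- continuity of trajectories in time
  have haC : ∀ q, Continuous fun s => Ψ s q := fun q =>
    continuous_iff_continuousAt.2 fun s => (hflow q s).differentiableAt.continuousAt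
  -- the compact tube around the trajectory of `q₀`
  set T : Set (ℝ × ℝ) :=
    (fun p : ℝ × ℝ => (p.1, Ψ p.1 q₀ + p.2)) '' (Icc t₀ t₁ ×ˢ Icc (-1 : ℝ) 1) with hT
  have hTc : IsCompact T :=
    (isCompact_Icc.prod isCompact_Icc).image
      (continuous_fst.prodMk (((haC q₀).comp continuous_fst).add continuous_snd))
  have hTmem : ∀ s x, s ∈ Icc t₀ t₁ → |x - Ψ s q₀| ≤ 1 → (s, x) ∈ T := by
    intro s x hs hx
    exact ⟨(s, x - Ψ s q₀), ⟨hs, abs_le.1 hx⟩, by simp⟩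
  -- bound on `fq` on the tube
  obtain ⟨C, hC⟩ := hTc.exists_bound_of_continuousOn hfqC.continuousOn
  set K : ℝ := max C 1 with hKdef
  have hK1 : (1:ℝ) ≤ K := le_max_right _ _
  have hKpos : (0:ℝ) < K := lt_of_lt_of_le one_pos hK1
  have hK : ∀ s x, (s, x) ∈ T → |fq s x| ≤ K := fun s x h =>
    le_trans (hC (s, x) h) (le_max_left _ _)
  -- points of tube slices
  have slice : ∀ s x y z : ℝ, |x - Ψ s q₀| ≤ 1 → |y - Ψ s q₀| ≤ 1 →
      z ∈ Icc (min x y) (max x y) → |z - Ψ s q₀| ≤ 1 := by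
    intro s x y z hx hy hz
    rw [abs_le] at hx hy ⊢
    rcases hz with ⟨h1, h2⟩
    rcases le_total x y with h | h
    · rw [min_eq_left h] at h1; rw [max_eq_right h] at h2
      exact ⟨by linarith [hx.1], by linarith [hy.2]⟩
    · rw [min_eq_right h] at h1; rw [max_eq_left h] at h2
      exact ⟨by linarith [hy.1], by linarith [hx.2]⟩
  -- Lipschitz property of `fbar` on tube slices
  have hLip : ∀ s, s ∈ Icc t₀ t₁ → ∀ x y, |x - Ψ s q₀| ≤ 1 → |y - Ψ s q₀| ≤ 1 →
      |fbar s x - fbar s y| ≤ K * |x - y| := by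
    intro s hs x y hx hy
    exact seg_bound' (fun z _ => hfq s z)
      (fun z hz => hK s z (hTmem s z hs (slice s x y z hx hy hz)))
  -- derivative of the difference of two trajectories
  have dD : ∀ q s, HasDerivAt (fun t => Ψ t q - Ψ t q₀)
      (-(fbar s (Ψ s q)) - -(fbar s (Ψ s q₀))) s := fun q s => (hflow q s).sub (hflow q₀ s)
  have hdC : ∀ q, Continuous fun t => Ψ t q - Ψ t q₀ := fun q => (haC q).sub (haC q₀)
  -- Gronwall estimate, conditional on staying in the tube
  have gron : ∀ q, ∀ x ∈ Icc t₀ t₁, (∀ t ∈ Icc t₀ x, |Ψ t q - Ψ t q₀| ≤ 1) →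
      ∀ t ∈ Icc t₀ x, |Ψ t q - Ψ t q₀| ≤ |q - q₀| * Real.exp (K * (t - t₀)) := by
    intro q x hx hS t htmem
    have key := norm_le_gronwallBound_of_norm_deriv_right_le (f := fun t => Ψ t q - Ψ t q₀)
      (f' := fun s => -(fbar s (Ψ s q)) - -(fbar s (Ψ s q₀))) (δ := |q - q₀|) (K := K)
      (ε := 0) (a := t₀) (b := x)
      ((hdC q).continuousOn)
      (fun s _ => (dD q s).hasDerivWithinAt)
      (by simp [hid])
      (fun s hs => ?_) t htmem
    · rwa [Real.norm_eq_abs, gronwallBound_ε0] at key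
    · have hsI : s ∈ Icc t₀ t₁ := ⟨hs.1, le_trans hs.2.le hx.2⟩
      have h1 : |Ψ s q - Ψ s q₀| ≤ 1 := hS s ⟨hs.1, hs.2.le⟩
      have h2 := hLip s hsI (Ψ s q) (Ψ s q₀) h1 (by simp)
      have e1 : -(fbar s (Ψ s q)) - -(fbar s (Ψ s q₀))
          = -(fbar s (Ψ s q) - fbar s (Ψ s q₀)) := by ring
      simp only [Real.norm_eq_abs, add_zero]
      rw [e1, abs_neg]
      exact h2
  -- tube invariance for nearby initial conditions
  set δ₀ : ℝ := Real.exp (-(K * (t₁ - t₀))) / 2 with hδ₀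
  have hδ₀pos : 0 < δ₀ := by positivity
  have hhalf : ∀ q, |q - q₀| ≤ δ₀ → ∀ t ∈ Icc t₀ t₁,
      |q - q₀| * Real.exp (K * (t - t₀)) ≤ 1/2 := by
    intro q hq t htI
    have h1 : Real.exp (K * (t - t₀)) ≤ Real.exp (K * (t₁ - t₀)) :=
      Real.exp_le_exp.2 (by nlinarith [htI.2, hKpos])
    have h2 : |q - q₀| * Real.exp (K * (t - t₀)) ≤ δ₀ * Real.exp (K * (t₁ - t₀)) :=
      mul_le_mul hq h1 (Real.exp_pos _).le hδ₀pos.le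
    have h3 : δ₀ * Real.exp (K * (t₁ - t₀)) = 1/2 := by
      rw [hδ₀, Real.exp_neg]
      field_simp
    linarith
  have inv : ∀ q, |q - q₀| ≤ δ₀ → ∀ s ∈ Icc t₀ t₁,
      |Ψ s q - Ψ s q₀| ≤ |q - q₀| * Real.exp (K * (s - t₀)) := by
    intro q hq
    have hsub : Icc t₀ t₁ ⊆ {x | ∀ t ∈ Icc t₀ x, |Ψ t q - Ψ t q₀| ≤ 1} := by
      apply IsClosed.Icc_subset_of_forall_exists_gt
      · -- closedness of `S ∩ Icc t₀ t₁`
        apply IsSeqClosed.isClosed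
        intro xs p hxs hp
        have hpI : p ∈ Icc t₀ t₁ :=
          isClosed_Icc.mem_of_tendsto hp (Eventually.of_forall fun n => (hxs n).2)
        refine ⟨fun t htm => ?_, hpI⟩
        have hc : Continuous fun y => |Ψ y q - Ψ y q₀| := (hdC q).abs
        have hmin : Tendsto (fun n => min t (xs n)) atTop (𝓝 t) := by
          have h0 : Tendsto (fun n => min t (xs n)) atTop (𝓝 (min t p)) :=
            (tendsto_const_nhds : Tendsto (fun _ : ℕ => t) atTop (𝓝 t)).min hp
          rwa [min_eq_left htm.2] at h0
        have htend : Tendsto (fun n => |Ψ (min t (xs n)) q - Ψ (min t (xs n)) q₀|)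
            atTop (𝓝 (|Ψ t q - Ψ t q₀|)) := (hc.continuousAt.tendsto).comp hmin
        refine le_of_tendsto htend (Eventually.of_forall fun n => ?_)
        exact (hxs n).1 (min t (xs n)) ⟨le_min htm.1 (hxs n).2.1, min_le_right _ _⟩
      · intro t htm
        have ht0 : t = t₀ := le_antisymm htm.2 htm.1
        rw [ht0, hid, hid]
        have : δ₀ ≤ 1/2 := by
          have : Real.exp (-(K * (t₁ - t₀))) ≤ 1 := by
            rw [Real.exp_le_one_iff]
            nlinarith [hKpos, ht]
          rw [hδ₀]; linarith
        linarith [hq]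
      · intro x hx y hy
        have hbd : ∀ t ∈ Icc t₀ x, |Ψ t q - Ψ t q₀| ≤ 1/2 := by
          intro t htm
          exact le_trans (gron q x ⟨hx.2.1, hx.2.2.le⟩ hx.1 t htm)
            (hhalf q hq t ⟨htm.1, le_trans htm.2 hx.2.2.le⟩)
        have hdx : |Ψ x q - Ψ x q₀| < 1 := by
          have := hbd x ⟨hx.2.1, le_refl x⟩
          linarith
        have hnb : {z | |Ψ z q - Ψ z q₀| < 1} ∈ 𝓝 x :=
          ((hdC q).abs.continuousAt).preimage_mem_nhds (Iio_mem_nhds hdx)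
        obtain ⟨r, hr, hball⟩ := Metric.mem_nhds_iff.1 hnb
        refine ⟨min y (x + r/2), fun t htm => ?_, ⟨lt_min hy (by linarith), min_le_left _ _⟩⟩
        rcases le_or_gt t x with h | h
        · exact le_trans (hbd t ⟨htm.1, h⟩) (by norm_num)
        · have htb : t ∈ Metric.ball x r := by
            rw [Metric.mem_ball, Real.dist_eq, abs_of_pos (by linarith)]
            have : t ≤ x + r/2 := le_trans htm.2 (min_le_right _ _)
            linarith
          exact (hball htb).le
    intro s hs
    exact gron q t₁ (right_mem_Icc.2 ht) (hsub (right_mem_Icc.2 ht)) s hs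
  -- the linearized solution η
  have hcont_int : Continuous fun t => fq t (Ψ t q₀) :=
    hfqC.comp (continuous_id.prodMk (haC q₀))
  set η : ℝ → ℝ := fun s => Real.exp (-∫ t in t₀..s, fq t (Ψ t q₀)) with hη
  have hηd : ∀ s, HasDerivAt η (η s * (-(fq s (Ψ s q₀)))) s := by
    intro s
    have hI : HasDerivAt (fun s => ∫ t in t₀..s, fq t (Ψ t q₀)) (fq s (Ψ s q₀)) s :=
      intervalIntegral.integral_hasDerivAt_right (hcont_int.intervalIntegrable _ _)
        (hcont_int.stronglyMeasurableAtFilter _ _) hcont_int.continuousAt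
    exact hI.neg.exp
  have hηC : Continuous η :=
    continuous_iff_continuousAt.2 fun s => (hηd s).differentiableAt.continuousAt
  -- global constants
  set E : ℝ := Real.exp (K * (t₁ - t₀)) with hE
  have hE1 : (1:ℝ) ≤ E := by
    rw [hE, ← Real.exp_zero]
    exact Real.exp_le_exp.2 (by nlinarith [hKpos])
  have hEpos : (0:ℝ) < E := lt_of_lt_of_le one_pos hE1
  have htube : ∀ q, |q - q₀| ≤ δ₀ → ∀ s ∈ Icc t₀ t₁,
      |Ψ s q - Ψ s q₀| ≤ |q - q₀| * E ∧ |Ψ s q - Ψ s q₀| ≤ 1 := by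
    intro q hq s hs
    constructor
    · refine le_trans (inv q hq s hs) ?_
      exact mul_le_mul_of_nonneg_left
        (Real.exp_le_exp.2 (by nlinarith [hs.2, hKpos])) (abs_nonneg _)
    · exact le_trans (inv q hq s hs) (le_trans (hhalf q hq s hs) (by norm_num))
  -- uniform continuity of fq on the tube
  have hUC := hTc.uniformContinuousOn_of_continuous hfqC.continuousOn
  rw [Metric.uniformContinuousOn_iff] at hUC
  -- the key mean-value estimate
  have key_est : ∀ ε' > (0:ℝ), ∀ δ' > (0:ℝ),
      (∀ p ∈ T, ∀ p' ∈ T, dist p p' < δ' → dist (Function.uncurry fq p) (Function.uncurry fq p') < ε') →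
      ∀ q, |q - q₀| ≤ δ₀ → |q - q₀| * E < δ' → ∀ s ∈ Icc t₀ t₁,
      |fbar s (Ψ s q) - fbar s (Ψ s q₀) - fq s (Ψ s q₀) * (Ψ s q - Ψ s q₀)|
        ≤ ε' * |Ψ s q - Ψ s q₀| := by
    intro ε' hε' δ' hδ'pos hδ' q hq hqE s hs
    have hx1 : |Ψ s q - Ψ s q₀| ≤ 1 := (htube q hq s hs).2
    have hbnd := seg_bound' (g := fun z => fbar s z - fq s (Ψ s q₀) * z)
      (g' := fun z => fq s z - fq s (Ψ s q₀)) (x := Ψ s q) (y := Ψ s q₀) (C := ε')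
      (fun z _ => (hfq s z).sub (by simpa using (hasDerivAt_id z).const_mul (fq s (Ψ s q₀))))
      (fun z hz => ?_)
    · calc |fbar s (Ψ s q) - fbar s (Ψ s q₀) - fq s (Ψ s q₀) * (Ψ s q - Ψ s q₀)|
          = |(fbar s (Ψ s q) - fq s (Ψ s q₀) * Ψ s q)
              - (fbar s (Ψ s q₀) - fq s (Ψ s q₀) * Ψ s q₀)| := by ring_nf
      _ ≤ ε' * |Ψ s q - Ψ s q₀| := hbnd
    · have hz1 : |z - Ψ s q₀| ≤ 1 := slice s (Ψ s q) (Ψ s q₀) z hx1 (by simp) hz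
      have hmemz : (s, z) ∈ T := hTmem s z hs hz1
      have hmemy : (s, Ψ s q₀) ∈ T := hTmem s (Ψ s q₀) hs (by simp)
      have hdz : |z - Ψ s q₀| ≤ |Ψ s q - Ψ s q₀| := mem_minmax_dist hz
      have hdist : dist (s, z) (s, Ψ s q₀) < δ' := by
        rw [Prod.dist_eq]
        simp only [dist_self, Real.dist_eq]
        have h1 : |z - Ψ s q₀| < δ' :=
          lt_of_le_of_lt (le_trans hdz (htube q hq s hs).1) hqE
        exact max_lt hδ'pos h1
      have := hδ' _ hmemz _ hmemy hdist
      rw [Real.dist_eq] at this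
      exact this.le
  constructor
  · -- differentiability
    rw [hasDerivAt_iff_isLittleO, Asymptotics.isLittleO_iff]
    intro c hc
    set C₂ : ℝ := gronwallBound 0 K 1 (t₁ - t₀) with hC₂
    have hC₂0 : 0 ≤ C₂ := gb_nonneg hKpos (by linarith)
    set ε' : ℝ := c / (E * (C₂ + 1)) with hε'
    have hε'pos : 0 < ε' := div_pos hc (by nlinarith)
    obtain ⟨δ', hδ'pos, hδ'⟩ := hUC ε' hε'pos
    have hρpos : 0 < min δ₀ (δ' / (2 * E)) := lt_min hδ₀pos (by positivity)
    filter_upwards [Metric.ball_mem_nhds q₀ hρpos] with q hqball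
    rw [Metric.mem_ball, Real.dist_eq] at hqball
    have hδ0 : |q - q₀| ≤ δ₀ := le_trans hqball.le (min_le_left _ _)
    have hδ2 : |q - q₀| ≤ δ' / (2 * E) := le_trans hqball.le (min_le_right _ _)
    have hqE : |q - q₀| * E < δ' := by
      have h1 : |q - q₀| * E ≤ δ' / (2 * E) * E := mul_le_mul_of_nonneg_right hδ2 hEpos.le
      have h2 : δ' / (2 * E) * E = δ' / 2 := by field_simp
      rw [h2] at h1
      linarith
    have hKE := key_est ε' hε'pos δ' hδ'pos hδ' q hδ0 hqE
    -- Gronwall for the remainder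
    set D : ℝ → ℝ := fun s => Ψ s q - Ψ s q₀ - (q - q₀) * η s with hDdef
    have hDd : ∀ s, HasDerivAt D
        ((-(fbar s (Ψ s q)) - -(fbar s (Ψ s q₀))) - (q - q₀) * (η s * (-(fq s (Ψ s q₀))))) s :=
      fun s => ((hflow q s).sub (hflow q₀ s)).sub ((hηd s).const_mul (q - q₀))
    have hD0 : D t₀ = 0 := by
      simp [hDdef, hη, hid, intervalIntegral.integral_same]
    have hgrD := norm_le_gronwallBound_of_norm_deriv_right_le (f := D)
      (f' := fun s => (-(fbar s (Ψ s q)) - -(fbar s (Ψ s q₀)))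
        - (q - q₀) * (η s * (-(fq s (Ψ s q₀)))))
      (δ := 0) (K := K) (ε := ε' * (|q - q₀| * E)) (a := t₀) (b := t₁)
      (((hdC q).sub (continuous_const.mul hηC)).continuousOn)
      (fun s _ => (hDd s).hasDerivWithinAt)
      (by rw [hD0]; simp)
      (fun s hs => ?_) t₁ (right_mem_Icc.2 ht)
    · have hfin : ε' * E * C₂ ≤ c := by
        rw [hε', div_mul_eq_mul_div, div_mul_eq_mul_div, div_le_iff₀ (by nlinarith)]
        nlinarith [hc.le, hE1, hC₂0]
      rw [Real.norm_eq_abs, gb_eps] at hgrD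
      simp only [smul_eq_mul, Real.norm_eq_abs]
      calc |Ψ t₁ q - Ψ t₁ q₀ - (q - q₀) * Real.exp (-∫ s in t₀..t₁, fq s (Ψ s q₀))|
          = |D t₁| := by rw [hDdef]
      _ ≤ ε' * (|q - q₀| * E) * C₂ := hgrD
      _ ≤ c * |q - q₀| := by nlinarith [abs_nonneg (q - q₀)]
    · -- the Gronwall bound hypothesis
      have hsI : s ∈ Icc t₀ t₁ := ⟨hs.1, hs.2.le⟩
      have h1 := hKE s hsI
      have h2 : |fq s (Ψ s q₀)| ≤ K := hK s _ (hTmem s _ hsI (by simp))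
      have e3 : (-(fbar s (Ψ s q)) - -(fbar s (Ψ s q₀))) - (q - q₀) * (η s * (-(fq s (Ψ s q₀))))
          = -(fbar s (Ψ s q) - fbar s (Ψ s q₀) - fq s (Ψ s q₀) * (Ψ s q - Ψ s q₀))
            - fq s (Ψ s q₀) * D s := by
        simp only [hDdef]
        ring
      simp only [Real.norm_eq_abs]
      rw [e3]
      have h3 : |(-(fbar s (Ψ s q) - fbar s (Ψ s q₀) - fq s (Ψ s q₀) * (Ψ s q - Ψ s q₀)))
          - fq s (Ψ s q₀) * D s|
          ≤ |fbar s (Ψ s q) - fbar s (Ψ s q₀) - fq s (Ψ s q₀) * (Ψ s q - Ψ s q₀)|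
            + |fq s (Ψ s q₀)| * |D s| := by
        refine le_trans (abs_sub _ _) ?_
        rw [abs_neg, abs_mul]
      have h4 : |fbar s (Ψ s q) - fbar s (Ψ s q₀) - fq s (Ψ s q₀) * (Ψ s q - Ψ s q₀)|
          ≤ ε' * (|q - q₀| * E) :=
        le_trans h1 (mul_le_mul_of_nonneg_left (htube q hδ0 s hsI).1 hε'pos.le)
      have h5 : |fq s (Ψ s q₀)| * |D s| ≤ K * |D s| :=
        mul_le_mul_of_nonneg_right h2 (abs_nonneg _)
      linarith
  · -- continuity of the exponent integral
    rw [Metric.continuousAt_iff]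
    intro ε hε
    set ε' : ℝ := ε / (2 * (t₁ - t₀) + 1) with hε'
    have hε'pos : 0 < ε' := div_pos hε (by nlinarith)
    obtain ⟨δ', hδ'pos, hδ'⟩ := hUC ε' hε'pos
    refine ⟨min δ₀ (δ' / (2 * E)), lt_min hδ₀pos (by positivity), ?_⟩
    intro q hqball
    rw [Real.dist_eq] at hqball
    have hδ0 : |q - q₀| ≤ δ₀ := le_trans hqball.le (min_le_left _ _)
    have hδ2 : |q - q₀| ≤ δ' / (2 * E) := le_trans hqball.le (min_le_right _ _)
    have hqE : |q - q₀| * E < δ' := by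
      have h1 : |q - q₀| * E ≤ δ' / (2 * E) * E := mul_le_mul_of_nonneg_right hδ2 hEpos.le
      have h2 : δ' / (2 * E) * E = δ' / 2 := by field_simp
      rw [h2] at h1
      linarith
    have hcq : Continuous fun s => fq s (Ψ s q) := hfqC.comp (continuous_id.prodMk (haC q))
    rw [Real.dist_eq, ← intervalIntegral.integral_sub (hcq.intervalIntegrable _ _)
      (hcont_int.intervalIntegrable _ _)]
    have hptw : ∀ s ∈ Set.uIoc t₀ t₁, ‖fq s (Ψ s q) - fq s (Ψ s q₀)‖ ≤ ε' := by
      intro s hsm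
      have hsI : s ∈ Icc t₀ t₁ := by
        rw [Set.uIoc_of_le ht] at hsm
        exact ⟨hsm.1.le, hsm.2⟩
      have hmem1 : (s, Ψ s q) ∈ T := hTmem s _ hsI (htube q hδ0 s hsI).2
      have hmem2 : (s, Ψ s q₀) ∈ T := hTmem s _ hsI (by simp)
      have hdist : dist (s, Ψ s q) (s, Ψ s q₀) < δ' := by
        rw [Prod.dist_eq]
        simp only [dist_self, Real.dist_eq]
        exact max_lt hδ'pos (lt_of_le_of_lt (htube q hδ0 s hsI).1 hqE)
      have := hδ' _ hmem1 _ hmem2 hdist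
      rw [Real.dist_eq] at this
      exact this.le
    have hbig := intervalIntegral.norm_integral_le_of_norm_le_const hptw
    rw [Real.norm_eq_abs] at hbig
    calc |∫ s in t₀..t₁, (fq s (Ψ s q) - fq s (Ψ s q₀))| ≤ ε' * |t₁ - t₀| := hbig
    _ < ε := by
        rw [abs_of_nonneg (by linarith), hε']
        rw [div_mul_eq_mul_div, div_lt_iff₀ (by nlinarith)]
        nlinarith

/-- Differentiability of `q ↦ Ψ 0 u q` with continuous positive derivative. -/
lemma flowDeriv (fbar : ℝ → ℝ → ℝ) (hfbar : ContDiff ℝ 1 (Function.uncurry fbar))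
    (Ψ : ℝ → ℝ → ℝ → ℝ)
    (hflow : ∀ u₀ q₀ u₁, HasDerivAt (fun v => Ψ v u₀ q₀) (-(fbar u₁ (Ψ u₁ u₀ q₀))) u₁)
    (hid : ∀ u q, Ψ u u q = q) (u : ℝ) :
    ∃ g : ℝ → ℝ, Continuous g ∧ (∀ q, 0 < g q) ∧
      ∀ q, HasDerivAt (fun x => Ψ 0 u x) (g q) q := by
  have hFd : Differentiable ℝ (Function.uncurry fbar) := hfbar.differentiable one_ne_zero
  set fq : ℝ → ℝ → ℝ := fun s x => fderiv ℝ (Function.uncurry fbar) (s, x) (0, 1) with hfqdef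
  have hfqC : Continuous (Function.uncurry fq) := by
    have h1 : Continuous (fderiv ℝ (Function.uncurry fbar)) := hfbar.continuous_fderiv one_ne_zero
    exact (h1.comp (continuous_fst.prodMk continuous_snd)).clm_apply continuous_const
  have hfq : ∀ s x, HasDerivAt (fun y => fbar s y) (fq s x) x := by
    intro s x
    have h1 : HasDerivAt (fun y : ℝ => ((s, y) : ℝ × ℝ)) (((0:ℝ), (1:ℝ))) x :=
      (hasDerivAt_const x s).prodMk (hasDerivAt_id x)
    exact (hFd (s, x)).hasFDerivAt.comp_hasDerivAt x h1
  rcases le_total u 0 with hu | hu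
  · have key := fun q₀ => fwdMain fbar fq hfqC hfq (fun v q => Ψ v u q) u 0 hu
      (fun q v => hflow u q v) (fun q => hid u q) q₀
    refine ⟨fun q => Real.exp (-∫ s in u..(0:ℝ), fq s (Ψ s u q)), ?_,
      fun q => Real.exp_pos _, fun q => (key q).1⟩
    exact Real.continuous_exp.comp
      (continuous_iff_continuousAt.2 fun q => ((key q).2).neg)
  · set fbar' : ℝ → ℝ → ℝ := fun v x => -fbar (u - v) x with hfb'
    set fq' : ℝ → ℝ → ℝ := fun v x => -fq (u - v) x with hfq'
    have hfq'C : Continuous (Function.uncurry fq') := by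
      have h2 : Continuous fun p : ℝ × ℝ => ((u - p.1, p.2) : ℝ × ℝ) :=
        (continuous_const.sub continuous_fst).prodMk continuous_snd
      exact (hfqC.comp h2).neg
    have hfq'd : ∀ s x, HasDerivAt (fun y => fbar' s y) (fq' s x) x :=
      fun s x => (hfq (u - s) x).neg
    have hflow' : ∀ q v, HasDerivAt (fun w => Ψ (u - w) u q) (-(fbar' v (Ψ (u - v) u q))) v := by
      intro q v
      have h1 : HasDerivAt (fun w : ℝ => u - w) (-1) v := (hasDerivAt_id v).const_sub u
      have h2 : HasDerivAt (fun w => Ψ (u - w) u q) _ v := (hflow u q (u - v)).comp v h1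
      convert h2 using 1
      simp [hfb']
    have key := fun q₀ => fwdMain fbar' fq' hfq'C hfq'd (fun w q => Ψ (u - w) u q) 0 u hu
      hflow' (fun q => by simpa using hid u q) q₀
    simp only [sub_self] at key
    refine ⟨fun q => Real.exp (-∫ s in (0:ℝ)..u, fq' s (Ψ (u - s) u q)), ?_,
      fun q => Real.exp_pos _, fun q => (key q).1⟩
    exact Real.continuous_exp.comp
      (continuous_iff_continuousAt.2 fun q => ((key q).2).neg)


/-- Properties of the O(2)-equivariant Lagrangian `L(u,p) = p·φ(u,p) − Ψ^{0,u}(p²/2)`: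
it is even in `p`, has `L_{pp}(u,p) = Ψ^{0,u}_q(p²/2) > 0`, and is strictly convex
in `p` for each fixed `u`. -/
theorem stmt16
    (fbar : ℝ → ℝ → ℝ) (hfbar : ContDiff ℝ 1 (Function.uncurry fbar))
    (Ψ : ℝ → ℝ → ℝ → ℝ)
    (hflow : ∀ u₀ q₀ u₁, HasDerivAt (fun v => Ψ v u₀ q₀) (-(fbar u₁ (Ψ u₁ u₀ q₀))) u₁)
    (hid : ∀ u q, Ψ u u q = q)
    (hcocycle : ∀ u₂ u₁ u₀ q, Ψ u₂ u₁ (Ψ u₁ u₀ q) = Ψ u₂ u₀ q)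
    (φ : ℝ → ℝ → ℝ)
    (hφ : ∀ u p, φ u p = ∫ p₂ in (0:ℝ)..p, deriv (Ψ 0 u) (p₂^2 / 2))
    (L : ℝ → ℝ → ℝ)
    (hL : ∀ u p, L u p = p * φ u p - Ψ 0 u (p^2 / 2)) :
    (∀ u p, L u (-p) = L u p)
    ∧ (∀ u p, deriv (fun w => deriv (fun w' => L u w') w) p = deriv (Ψ 0 u) (p^2 / 2)
        ∧ 0 < deriv (Ψ 0 u) (p^2 / 2))
    ∧ (∀ u, StrictConvexOn ℝ Set.univ (L u)) := by
  have main : ∀ u : ℝ, (∀ p, L u (-p) = L u p) ∧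
      (∀ p, deriv (fun w => deriv (fun w' => L u w') w) p = deriv (Ψ 0 u) (p^2 / 2)
        ∧ 0 < deriv (Ψ 0 u) (p^2 / 2)) ∧ StrictConvexOn ℝ Set.univ (L u) := by
    intro u
    obtain ⟨g, hgC, hgpos, hgd⟩ := flowDeriv fbar hfbar Ψ hflow hid u
    have hderiv_eq : deriv (Ψ 0 u) = g := funext fun q => (hgd q).deriv
    set h : ℝ → ℝ := fun p => g (p^2 / 2) with hh
    have hhC : Continuous h := hgC.comp (by continuity)
    have hφeq : ∀ p, φ u p = ∫ p₂ in (0:ℝ)..p, h p₂ := by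
      intro p; rw [hφ, hderiv_eq]
    have hφd : ∀ p, HasDerivAt (φ u) (h p) p := by
      intro p
      have h0 : HasDerivAt (fun p => ∫ p₂ in (0:ℝ)..p, h p₂) (h p) p :=
        intervalIntegral.integral_hasDerivAt_right (hhC.intervalIntegrable _ _)
          (hhC.stronglyMeasurableAtFilter _ _) hhC.continuousAt
      exact h0.congr_of_eventuallyEq (Eventually.of_forall hφeq)
    have heven : ∀ x : ℝ, h (-x) = h x := by
      intro x
      have e : (-x)^2 = x^2 := by ring
      rw [hh]
      simp only [e]
    have hφodd : ∀ p, φ u (-p) = -φ u p := by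
      intro p
      have e1 : (∫ p₂ in (0:ℝ)..p, h p₂) = ∫ p₂ in (0:ℝ)..p, h (-p₂) :=
        intervalIntegral.integral_congr fun x _ => (heven x).symm
      have e2 : (∫ p₂ in (0:ℝ)..p, h (-p₂)) = ∫ p₂ in (-p)..(-(0:ℝ)), h p₂ :=
        intervalIntegral.integral_comp_neg _
      rw [hφeq, hφeq, e1, e2, neg_zero]
      exact intervalIntegral.integral_symm _ _
    have hLeven : ∀ p, L u (-p) = L u p := by
      intro p
      rw [hL, hL, hφodd]
      have e : (-p)^2 = p^2 := by ring
      rw [e]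
      ring
    have hLd : ∀ p, HasDerivAt (L u) (φ u p) p := by
      intro p
      have hLfun : L u = fun p => p * φ u p - Ψ 0 u (p^2/2) := funext (hL u)
      rw [hLfun]
      have h1 : HasDerivAt (fun p : ℝ => p * φ u p) (1 * φ u p + p * h p) p :=
        (hasDerivAt_id p).mul (hφd p)
      have h2 : HasDerivAt (fun p : ℝ => p^2/2) p p := by
        have := (hasDerivAt_pow 2 p).div_const 2
        simpa using this
      have h3 : HasDerivAt (fun p : ℝ => Ψ 0 u (p^2/2)) (g (p^2/2) * p) p :=
        (HasDerivAt.comp p (hgd (p^2/2)) h2 : _)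
      have h4 : HasDerivAt (fun p => p * φ u p - Ψ 0 u (p^2/2)) _ p := h1.sub h3
      convert h4 using 1
      rw [hh]
      ring
    have hder1 : deriv (L u) = φ u := funext fun p => (hLd p).deriv
    have hder2 : ∀ p, deriv (φ u) p = h p := fun p => (hφd p).deriv
    have heta : (fun w' => L u w') = L u := rfl
    refine ⟨hLeven, fun p => ⟨?_, ?_⟩, ?_⟩
    · rw [heta]
      have heta2 : (fun w => deriv (L u) w) = deriv (L u) := rfl
      rw [heta2, hder1, hder2, hderiv_eq, hh]
    · rw [hderiv_eq]; exact hgpos _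
    · refine StrictMonoOn.strictConvexOn_of_deriv convex_univ ?_ ?_
      · exact (continuous_iff_continuousAt.2
          fun p => (hLd p).differentiableAt.continuousAt).continuousOn
      · rw [interior_univ, hder1]
        have : StrictMono (φ u) := by
          apply strictMono_of_deriv_pos
          intro p
          rw [hder2]
          exact hgpos _
        exact this.strictMonoOn _
  exact ⟨fun u p => (main u).1 p, fun u p => (main u).2.1 p, fun u => (main u).2.2⟩
end
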